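/- arXiv:1011.4368 — 3 statements merged into one kernel-verified Lean document; each statement's English description precedes it below -/
import Mathlib

section
/- For every even integer n ≥ 4, the symmetric group S_n satisfies γ(S_n) ≤ ⌊(n+4)/4⌋. -/
set_option linter.unusedSectionVars false

open Equiv Function

namespace GammaAux

variable {α : Type*} [Fintype α] [DecidableEq α]

lemma image_perm_compl (g : Equiv.Perm α) (s : Finset α) :
    sᶜ.image ⇑g = (s.image ⇑g)ᶜ := by
  ext y
  simp only [Finset.mem_image, Finset.mem_compl]
  constructor
  · rintro ⟨a, ha, rfl⟩ ⟨b, hb, hba⟩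
    exact ha (by rwa [g.injective hba] at hb)
  · intro h
    exact ⟨g.symm y, fun hs => h ⟨g.symm y, hs, g.apply_symm_apply y⟩, g.apply_symm_apply y⟩

/-- setwise stabilizer of a finset -/
def setStab (s : Finset α) : Subgroup (Equiv.Perm α) where
  carrier := {g | s.image ⇑g = s}
  one_mem' := by simp
  mul_mem' := by
    intro a b ha hb
    simp only [Set.mem_setOf_eq] at *
    rw [Equiv.Perm.coe_mul, ← Finset.image_image, hb, ha]
  inv_mem' := by
    intro a ha
    simp only [Set.mem_setOf_eq] at *
    conv_lhs => rw [← ha]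
    rw [Finset.image_image]
    have : ⇑a⁻¹ ∘ ⇑a = id := funext fun y => a.symm_apply_apply y
    rw [this, Finset.image_id]

lemma mem_setStab {s : Finset α} {g : Equiv.Perm α} :
    g ∈ setStab s ↔ s.image ⇑g = s := Iff.rfl


/-- stabilizer of the partition {s, sᶜ} -/
def pairStab (s : Finset α) : Subgroup (Equiv.Perm α) where
  carrier := {g | s.image ⇑g = s ∨ s.image ⇑g = sᶜ}
  one_mem' := Or.inl (by simp)
  mul_mem' := by
    intro a b ha hb
    simp only [Set.mem_setOf_eq] at *
    have hab : s.image ⇑(a * b) = (s.image ⇑b).image ⇑a := by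
      rw [Equiv.Perm.coe_mul, ← Finset.image_image]
    rcases hb with hb | hb
    · rw [hab, hb]; exact ha
    · rw [hab, hb, image_perm_compl]
      rcases ha with ha | ha
      · rw [ha]; exact Or.inr rfl
      · rw [ha, compl_compl]; exact Or.inl rfl
  inv_mem' := by
    intro a ha
    simp only [Set.mem_setOf_eq] at *
    have hid : ⇑a⁻¹ ∘ ⇑a = id := funext fun y => a.symm_apply_apply y
    rcases ha with ha | ha
    · left
      conv_lhs => rw [← ha]
      rw [Finset.image_image, hid, Finset.image_id]
    · right
      have h2 : sᶜ.image ⇑a⁻¹ = s := by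
        rw [← ha, Finset.image_image, hid, Finset.image_id]
      rw [image_perm_compl] at h2
      rw [← compl_compl (s.image ⇑a⁻¹), h2]

lemma mem_pairStab {s : Finset α} {g : Equiv.Perm α} :
    g ∈ pairStab s ↔ (s.image ⇑g = s ∨ s.image ⇑g = sᶜ) := Iff.rfl

lemma setStab_ne_top {s : Finset α} (h1 : s.Nonempty) (h2 : sᶜ.Nonempty) :
    setStab s ≠ ⊤ := by
  obtain ⟨a, ha⟩ := h1
  obtain ⟨b, hb⟩ := h2
  rw [Finset.mem_compl] at hb
  intro h
  have hm : Equiv.swap a b ∈ setStab s := by rw [h]; trivial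
  rw [mem_setStab] at hm
  have : b ∈ s.image ⇑(Equiv.swap a b) :=
    Finset.mem_image.mpr ⟨a, ha, Equiv.swap_apply_left a b⟩
  rw [hm] at this
  exact hb this

lemma pairStab_ne_top {s : Finset α} (h1 : 2 ≤ s.card) (h2 : sᶜ.Nonempty) :
    pairStab s ≠ ⊤ := by
  obtain ⟨a, ha, b, hb, hab⟩ := Finset.one_lt_card.mp h1
  obtain ⟨c, hc⟩ := h2
  rw [Finset.mem_compl] at hc
  intro h
  have hm : Equiv.swap a c ∈ pairStab s := by rw [h]; trivial
  have hac : a ≠ c := fun e => hc (e ▸ ha)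
  have hbc : b ≠ c := fun e => hc (e ▸ hb)
  have hcmem : c ∈ s.image ⇑(Equiv.swap a c) :=
    Finset.mem_image.mpr ⟨a, ha, Equiv.swap_apply_left a c⟩
  have hbmem : b ∈ s.image ⇑(Equiv.swap a c) :=
    Finset.mem_image.mpr ⟨b, hb, Equiv.swap_apply_of_ne_of_ne (Ne.symm hab) hbc⟩
  rcases hm with hm | hm
  · rw [hm] at hcmem; exact hc hcmem
  · rw [hm, Finset.mem_compl] at hbmem; exact hbmem hb

section Orbit

variable (g : Equiv.Perm α) (x : α)

/-- the orbit of `x` under `g` as a finset -/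
noncomputable def orbitF : Finset α :=
  (Finset.range (Function.minimalPeriod ⇑g x)).image (fun i => (g ^ i) x)

lemma period_pos : 0 < Function.minimalPeriod ⇑g x := by
  apply Function.IsPeriodicPt.minimalPeriod_pos (orderOf_pos g)
  show (⇑g)^[orderOf g] x = x
  rw [Equiv.Perm.iterate_eq_pow, pow_orderOf_eq_one]
  rfl

lemma pow_period_apply : (g ^ Function.minimalPeriod ⇑g x) x = x := by
  have := Function.iterate_minimalPeriod (f := ⇑g) (x := x)
  rwa [Equiv.Perm.iterate_eq_pow] at this

lemma injOn_pow_apply :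
    Set.InjOn (fun i => (g ^ i) x) (Set.Iio (Function.minimalPeriod ⇑g x)) := by
  have := Function.iterate_injOn_Iio_minimalPeriod (f := ⇑g) (x := x)
  intro i hi j hj hij
  exact this hi hj (by simpa [Equiv.Perm.iterate_eq_pow] using hij)

lemma card_orbitF : (orbitF g x).card = Function.minimalPeriod ⇑g x := by
  rw [orbitF, Finset.card_image_of_injOn, Finset.card_range]
  intro i hi j hj hij
  exact injOn_pow_apply g x (Finset.mem_range.mp (Finset.mem_coe.mp hi))
    (Finset.mem_range.mp (Finset.mem_coe.mp hj)) hij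

lemma mem_orbitF_self : x ∈ orbitF g x :=
  Finset.mem_image.mpr ⟨0, Finset.mem_range.mpr (period_pos g x), by simp⟩

lemma pow_mem_orbitF (i : ℕ) : (g ^ i) x ∈ orbitF g x := by
  set p := Function.minimalPeriod ⇑g x with hp
  have hp0 : 0 < p := period_pos g x
  have hmul : ∀ q : ℕ, (g ^ (p * q)) x = x := by
    intro q
    induction q with
    | zero => simp
    | succ m ih =>
        rw [Nat.mul_succ, pow_add, Equiv.Perm.mul_apply, pow_period_apply, ih]
  have : (g ^ i) x = (g ^ (i % p)) x := by
    conv_lhs => rw [← Nat.mod_add_div i p]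
    rw [pow_add, Equiv.Perm.mul_apply, hmul]
  rw [this]
  exact Finset.mem_image.mpr ⟨i % p, Finset.mem_range.mpr (Nat.mod_lt _ hp0), rfl⟩

lemma image_orbitF : (orbitF g x).image ⇑g = orbitF g x := by
  apply Finset.eq_of_subset_of_card_le
  · intro y hy
    obtain ⟨z, hz, rfl⟩ := Finset.mem_image.mp hy
    obtain ⟨i, _, rfl⟩ := Finset.mem_image.mp hz
    have : g ((g ^ i) x) = (g ^ (i + 1)) x := by
      rw [pow_succ', Equiv.Perm.mul_apply]
    rw [this]
    exact pow_mem_orbitF g x (i + 1)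
  · rw [Finset.card_image_of_injective _ g.injective]

lemma orbitF_subset {t : Finset α} (ht : t.image ⇑g = t) (hx : x ∈ t) :
    orbitF g x ⊆ t := by
  have hstep : ∀ a ∈ t, g a ∈ t := fun a ha => ht ▸ Finset.mem_image_of_mem ⇑g ha
  intro y hy
  obtain ⟨i, hi, rfl⟩ := Finset.mem_image.mp hy
  clear hy hi
  induction i with
  | zero => simpa using hx
  | succ m ih =>
      rw [pow_succ', Equiv.Perm.mul_apply]
      exact hstep _ ih

end Orbit

lemma exists_odd_period (g : Equiv.Perm α) :
    ∀ t : Finset α, t.image ⇑g = t → Odd t.card →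
      ∃ x ∈ t, Odd (Function.minimalPeriod ⇑g x) := by
  intro t
  induction t using Finset.strongInduction with
  | _ t ih =>
    intro hinv hodd
    have hne : t.Nonempty := Finset.card_pos.mp (by
      rcases hodd with ⟨m, hm⟩; omega)
    obtain ⟨x, hx⟩ := hne
    by_cases hxo : Odd (Function.minimalPeriod ⇑g x)
    · exact ⟨x, hx, hxo⟩
    · have hxe : Even (Function.minimalPeriod ⇑g x) := Nat.not_odd_iff_even.mp hxo
      set c := orbitF g x with hc
      have hcsub : c ⊆ t := orbitF_subset g x hinv hx
      have hcne : c.Nonempty := ⟨x, mem_orbitF_self g x⟩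
      have h1 : (t \ c).image ⇑g = t \ c := by
        rw [Finset.image_sdiff _ _ g.injective, hinv, image_orbitF]
      have h2 : Odd (t \ c).card := by
        rw [Finset.card_sdiff_of_subset hcsub, card_orbitF]
        exact Nat.Odd.sub_even
          (by rw [← card_orbitF g x]; exact Finset.card_le_card hcsub) hodd hxe
      obtain ⟨y, hy, hyo⟩ := ih (t \ c) (Finset.sdiff_ssubset hcsub hcne) h1 h2
      exact ⟨y, (Finset.mem_sdiff.mp hy).1, hyo⟩

lemma exists_half (g : Equiv.Perm α) :
    ∀ t : Finset α, t.image ⇑g = t →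
      (∀ x ∈ t, Even (Function.minimalPeriod ⇑g x)) →
      ∃ s ⊆ t, s.image ⇑g = t \ s := by
  intro t
  induction t using Finset.strongInduction with
  | _ t ih =>
    intro hinv hall
    rcases t.eq_empty_or_nonempty with rfl | ⟨x, hx⟩
    · exact ⟨∅, by simp⟩
    · set p := Function.minimalPeriod ⇑g x with hpdef
      have hpe : Even p := hall x hx
      have hp0 : 0 < p := period_pos g x
      have hp2 : 2 * (p / 2) = p := Nat.two_mul_div_two_of_even hpe
      set c := orbitF g x with hc
      have hcsub : c ⊆ t := orbitF_subset g x hinv hx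
      have hcne : c.Nonempty := ⟨x, mem_orbitF_self g x⟩
      have hcard : c.card = p := card_orbitF g x
      have hinj := injOn_pow_apply g x
      set s₁ : Finset α := (Finset.range (p / 2)).image (fun j => (g ^ (2 * j + 1)) x) with hs₁
      set e₁ : Finset α := (Finset.range (p / 2)).image (fun j => (g ^ (2 * j)) x) with he₁
      have hcards₁ : s₁.card = p / 2 := by
        rw [hs₁, Finset.card_image_of_injOn, Finset.card_range]
        intro i hi j hj hij
        have hi' := Finset.mem_range.mp (Finset.mem_coe.mp hi)
        have hj' := Finset.mem_range.mp (Finset.mem_coe.mp hj)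
        have := hinj (Set.mem_Iio.mpr (by omega : 2 * i + 1 < p))
          (Set.mem_Iio.mpr (by omega : 2 * j + 1 < p)) hij
        omega
      have hcarde₁ : e₁.card = p / 2 := by
        rw [he₁, Finset.card_image_of_injOn, Finset.card_range]
        intro i hi j hj hij
        have hi' := Finset.mem_range.mp (Finset.mem_coe.mp hi)
        have hj' := Finset.mem_range.mp (Finset.mem_coe.mp hj)
        have := hinj (Set.mem_Iio.mpr (by omega : 2 * i < p))
          (Set.mem_Iio.mpr (by omega : 2 * j < p)) hij
        omega
      have hs₁c : s₁ ⊆ c := by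
        intro y hy
        obtain ⟨j, hj, rfl⟩ := Finset.mem_image.mp hy
        exact pow_mem_orbitF g x _
      have he₁c : e₁ ⊆ c := by
        intro y hy
        obtain ⟨j, hj, rfl⟩ := Finset.mem_image.mp hy
        exact pow_mem_orbitF g x _
      have himg₁ : s₁.image ⇑g = e₁ := by
        apply Finset.eq_of_subset_of_card_le
        · intro y hy
          obtain ⟨z, hz, rfl⟩ := Finset.mem_image.mp hy
          obtain ⟨j, hj, rfl⟩ := Finset.mem_image.mp hz
          have hj' := Finset.mem_range.mp hj
          have hgz : g ((g ^ (2 * j + 1)) x) = (g ^ (2 * j + 2)) x := by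
            rw [show (g ^ (2 * j + 2)) = g * g ^ (2 * j + 1) from pow_succ' g (2 * j + 1),
              Equiv.Perm.mul_apply]
          rw [hgz]
          rcases Nat.lt_or_ge (2 * j + 2) p with h | h
          · refine Finset.mem_image.mpr ⟨j + 1, Finset.mem_range.mpr (by omega), ?_⟩
            have h2 : 2 * (j + 1) = 2 * j + 2 := by ring
            simp only [h2]
          · have hpeq : 2 * j + 2 = p := by omega
            rw [hpeq, pow_period_apply]
            exact Finset.mem_image.mpr ⟨0, Finset.mem_range.mpr (by omega), by simp⟩
        · rw [Finset.card_image_of_injective _ g.injective, hcards₁, hcarde₁]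
      have hdisj : Disjoint s₁ e₁ := by
        rw [Finset.disjoint_left]
        intro y hy1 hy2
        obtain ⟨i, hi, rfl⟩ := Finset.mem_image.mp hy1
        obtain ⟨j, hj, hji⟩ := Finset.mem_image.mp hy2
        have hi' := Finset.mem_range.mp hi
        have hj' := Finset.mem_range.mp hj
        have := hinj (Set.mem_Iio.mpr (by omega : 2 * j < p))
          (Set.mem_Iio.mpr (by omega : 2 * i + 1 < p)) hji
        omega
      have hunion : s₁ ∪ e₁ = c := by
        apply Finset.eq_of_subset_of_card_le
        · exact Finset.union_subset hs₁c he₁c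
        · rw [Finset.card_union_of_disjoint hdisj, hcards₁, hcarde₁, hcard]
          omega
      have hce : c \ s₁ = e₁ := by
        rw [← hunion, Finset.union_sdiff_cancel_left hdisj]
      -- recurse on t \ c
      have h1 : (t \ c).image ⇑g = t \ c := by
        rw [Finset.image_sdiff _ _ g.injective, hinv, image_orbitF]
      obtain ⟨s₂, hs₂sub, himg₂⟩ := ih (t \ c) (Finset.sdiff_ssubset hcsub hcne) h1
        (fun y hy => hall y (Finset.mem_sdiff.mp hy).1)
      refine ⟨s₁ ∪ s₂, ?_, ?_⟩
      · apply Finset.union_subset (hs₁c.trans hcsub)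
        exact hs₂sub.trans (Finset.sdiff_subset)
      · rw [Finset.image_union, himg₁, himg₂, ← hce]
        ext y
        simp only [Finset.mem_union, Finset.mem_sdiff]
        have hyc : y ∈ c → y ∈ t := fun h => hcsub h
        have hy1 : y ∈ s₁ → y ∈ c := fun h => hs₁c h
        have hy2 : y ∈ s₂ → y ∈ t ∧ y ∉ c := fun h => Finset.mem_sdiff.mp (hs₂sub h)
        tauto

lemma main_comb (g : Equiv.Perm α) (hev : Even (Fintype.card α)) :
    ∃ s : Finset α,
      (s.image ⇑g = s ∧ Odd s.card ∧ 2 * s.card < Fintype.card α) ∨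
      (s.image ⇑g = sᶜ) ∨
      (s.image ⇑g = s ∧ 2 * s.card = Fintype.card α) := by
  have huniv : (Finset.univ : Finset α).image ⇑g = Finset.univ :=
    Finset.image_univ_of_surjective g.surjective
  by_cases hall : ∀ x : α, Even (Function.minimalPeriod ⇑g x)
  · obtain ⟨s, _, himg⟩ := exists_half g Finset.univ huniv (fun x _ => hall x)
    refine ⟨s, Or.inr (Or.inl ?_)⟩
    rw [himg, Finset.compl_eq_univ_sdiff]
  · push_neg at hall
    obtain ⟨x, hx⟩ := hall
    have hxo : Odd (Function.minimalPeriod ⇑g x) := Nat.not_even_iff_odd.mp hx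
    set p := Function.minimalPeriod ⇑g x with hpdef
    set c := orbitF g x with hc
    have hcard : c.card = p := card_orbitF g x
    have hcinv : c.image ⇑g = c := image_orbitF g x
    have hcle : c.card ≤ Fintype.card α := Finset.card_le_univ c
    rcases lt_trichotomy (2 * p) (Fintype.card α) with h | h | h
    · exact ⟨c, Or.inl ⟨hcinv, hcard ▸ hxo, by omega⟩⟩
    · exact ⟨c, Or.inr (Or.inr ⟨hcinv, by omega⟩)⟩
    · have hcomplinv : cᶜ.image ⇑g = cᶜ := by rw [image_perm_compl, hcinv]
      have hcomplcard : cᶜ.card = Fintype.card α - p := by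
        rw [Finset.card_compl, hcard]
      have hcomplodd : Odd cᶜ.card := by
        rw [hcomplcard]
        exact Nat.Even.sub_odd (by omega) hev hxo
      obtain ⟨y, hy, hyo⟩ := exists_odd_period g cᶜ hcomplinv hcomplodd
      set c' := orbitF g y with hc'
      have hc'card : c'.card = Function.minimalPeriod ⇑g y := card_orbitF g y
      have hc'sub : c' ⊆ cᶜ := orbitF_subset g y hcomplinv hy
      have hc'le : c'.card ≤ cᶜ.card := Finset.card_le_card hc'sub
      refine ⟨c', Or.inl ⟨image_orbitF g y, hc'card ▸ hyo, ?_⟩⟩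
      omega

lemma exists_perm_image (s t : Finset α) (h : s.card = t.card) :
    ∃ x : Equiv.Perm α, s.image ⇑x = t := by
  have hcs : Fintype.card {a // a ∈ s} = Fintype.card {a // a ∈ t} := by
    simp [Fintype.card_coe, h]
  have e : {a // a ∈ s} ≃ {a // a ∈ t} := Fintype.equivOfCardEq hcs
  have e' : {a // ¬ a ∈ s} ≃ {a // ¬ a ∈ t} := by
    apply Fintype.equivOfCardEq
    rw [Fintype.card_subtype_compl, Fintype.card_subtype_compl, hcs]
  refine ⟨(Equiv.sumCompl (· ∈ s)).symm.trans ((e.sumCongr e').trans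
    (Equiv.sumCompl (· ∈ t))), ?_⟩
  set X : Equiv.Perm α := (Equiv.sumCompl (· ∈ s)).symm.trans ((e.sumCongr e').trans
    (Equiv.sumCompl (· ∈ t))) with hX
  have hsub : s.image ⇑X ⊆ t := by
    intro y hy
    obtain ⟨a, ha, rfl⟩ := Finset.mem_image.mp hy
    have h1 : (Equiv.sumCompl (· ∈ s)).symm a = Sum.inl ⟨a, ha⟩ :=
      Equiv.sumCompl_symm_apply_of_pos ha
    have h2 : X a = ↑(e ⟨a, ha⟩) := by
      show (Equiv.sumCompl (· ∈ t)) ((e.sumCongr e') ((Equiv.sumCompl (· ∈ s)).symm a))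
        = ↑(e ⟨a, ha⟩)
      rw [h1]
      rfl
    rw [h2]
    exact (e ⟨a, ha⟩).2
  exact Finset.eq_of_subset_of_card_le hsub
    (by rw [Finset.card_image_of_injective _ X.injective, h])

lemma image_conj (g x : Equiv.Perm α) (s : Finset α) :
    (s.image ⇑x).image ⇑(x * g * x⁻¹) = (s.image ⇑g).image ⇑x := by
  rw [Finset.image_image, Finset.image_image]
  congr 1
  funext a
  simp [Equiv.Perm.mul_apply]

lemma card_stdSet {n m : ℕ} (h : m ≤ n) :
    (Finset.univ.filter (fun a : Fin n => (a : ℕ) < m)).card = m := by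
  have key : (Finset.univ.filter (fun a : Fin n => (a : ℕ) < m)).card
      = (Finset.range m).card := by
    apply Finset.card_bij (fun (a : Fin n) _ => (a : ℕ))
    · intro a ha
      exact Finset.mem_range.mpr (Finset.mem_filter.mp ha).2
    · intro a _ b _ hab
      exact Fin.val_injective hab
    · intro b hb
      have hb' := Finset.mem_range.mp hb
      exact ⟨⟨b, lt_of_lt_of_le hb' h⟩, Finset.mem_filter.mpr ⟨Finset.mem_univ _, hb'⟩, rfl⟩
  rw [key, Finset.card_range]
end GammaAux


/-- The normal covering number γ(G): the smallest `k` such that there exist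
proper subgroups `H 1, …, H k` of `G` whose conjugates cover `G`. -/
noncomputable def normalCoveringNumber (G : Type*) [Group G] : ℕ :=
  sInf {k : ℕ | ∃ H : Fin k → Subgroup G, (∀ i, H i ≠ ⊤) ∧
    ∀ g : G, ∃ i, ∃ x : G, x * g * x⁻¹ ∈ H i}

theorem gamma_sym_even_upper (n : ℕ) (hn : 4 ≤ n) (he : Even n) :
    normalCoveringNumber (Equiv.Perm (Fin n)) ≤ (n + 4) / 4 := by
  classical
  obtain ⟨m, hm⟩ := he
  set k := (n + 4) / 4 with hkdef
  have hk2 : 2 ≤ k := by omega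
  have hcardFin : Fintype.card (Fin n) = n := Fintype.card_fin n
  set B : Finset (Fin n) := Finset.univ.filter (fun a : Fin n => (a : ℕ) < n / 2) with hB
  have hBcard : B.card = n / 2 := GammaAux.card_stdSet (by omega)
  have hBc : Bᶜ.card = n - n / 2 := by rw [Finset.card_compl, hBcard, hcardFin]
  unfold normalCoveringNumber
  apply Nat.sInf_le
  rw [Set.mem_setOf_eq]
  refine ⟨fun i : Fin k => if (i : ℕ) = 0 then GammaAux.pairStab B
    else GammaAux.setStab
      (Finset.univ.filter (fun a : Fin n => (a : ℕ) < 2 * (i : ℕ) - 1)), ?_, ?_⟩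
  · intro i
    beta_reduce
    by_cases h0 : (i : ℕ) = 0
    · rw [if_pos h0]
      apply GammaAux.pairStab_ne_top
      · rw [hBcard]; omega
      · apply Finset.card_pos.mp
        rw [hBc]; omega
    · rw [if_neg h0]
      have hik : (i : ℕ) < k := i.isLt
      have hmn : 2 * (i : ℕ) - 1 ≤ n := by omega
      have hcard := GammaAux.card_stdSet (n := n) (m := 2 * (i : ℕ) - 1) hmn
      apply GammaAux.setStab_ne_top
      · apply Finset.card_pos.mp
        rw [hcard]; omega
      · apply Finset.card_pos.mp
        rw [Finset.card_compl, hcard, hcardFin]; omega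
  · intro g
    have hev : Even (Fintype.card (Fin n)) := by rw [hcardFin]; exact ⟨m, hm⟩
    obtain ⟨s, hcase⟩ := GammaAux.main_comb g hev
    rcases hcase with ⟨hinv, hodd, hlt⟩ | hcompl | ⟨hinv, heq⟩
    · -- odd invariant set, small
      rw [hcardFin] at hlt
      obtain ⟨b, hb⟩ := hodd
      have hik : (s.card + 1) / 2 < k := by omega
      refine ⟨⟨(s.card + 1) / 2, hik⟩, ?_⟩
      have hi0 : (((⟨(s.card + 1) / 2, hik⟩ : Fin k)) : ℕ) ≠ 0 := by
        show (s.card + 1) / 2 ≠ 0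
        omega
      set t : Finset (Fin n) :=
        Finset.univ.filter (fun a : Fin n => (a : ℕ) < 2 * ((s.card + 1) / 2) - 1) with ht
      have htcard : t.card = s.card := by
        rw [ht, GammaAux.card_stdSet (by omega)]
        omega
      obtain ⟨x, hxim⟩ := GammaAux.exists_perm_image s t htcard.symm
      refine ⟨x, ?_⟩
      beta_reduce
      rw [if_neg hi0, GammaAux.mem_setStab]
      calc t.image ⇑(x * g * x⁻¹) = (s.image ⇑x).image ⇑(x * g * x⁻¹) := by rw [hxim]
        _ = (s.image ⇑g).image ⇑x := GammaAux.image_conj g x s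
        _ = s.image ⇑x := by rw [hinv]
        _ = t := hxim
    · -- g maps s to its complement
      have hs2 : 2 * s.card = n := by
        have h1 : (s.image ⇑g).card = s.card := Finset.card_image_of_injective _ g.injective
        have h2 : sᶜ.card = n - s.card := by rw [Finset.card_compl, hcardFin]
        have h3 : s.card ≤ n := by
          have h4 := Finset.card_le_univ s
          rw [hcardFin] at h4
          exact h4
        rw [hcompl, h2] at h1
        omega
      have htcard : s.card = B.card := by rw [hBcard]; omega
      obtain ⟨x, hxim⟩ := GammaAux.exists_perm_image s B htcard
      refine ⟨⟨0, by omega⟩, x, ?_⟩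
      beta_reduce
      rw [if_pos rfl, GammaAux.mem_pairStab]
      right
      calc B.image ⇑(x * g * x⁻¹) = (s.image ⇑x).image ⇑(x * g * x⁻¹) := by rw [hxim]
        _ = (s.image ⇑g).image ⇑x := GammaAux.image_conj g x s
        _ = (s.image ⇑x)ᶜ := by rw [hcompl, GammaAux.image_perm_compl]
        _ = Bᶜ := by rw [hxim]
    · -- invariant set of size n/2
      rw [hcardFin] at heq
      have htcard : s.card = B.card := by rw [hBcard]; omega
      obtain ⟨x, hxim⟩ := GammaAux.exists_perm_image s B htcard
      refine ⟨⟨0, by omega⟩, x, ?_⟩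
      beta_reduce
      rw [if_pos rfl, GammaAux.mem_pairStab]
      left
      calc B.image ⇑(x * g * x⁻¹) = (s.image ⇑x).image ⇑(x * g * x⁻¹) := by rw [hxim]
        _ = (s.image ⇑g).image ⇑x := GammaAux.image_conj g x s
        _ = s.image ⇑x := by rw [hinv]
        _ = B := hxim
end

section
/- For every odd integer n ≥ 5, the symmetric group S_n satisfies γ(S_n) ≤ (n−1)/2. -/
open Equiv

lemma ncn_le {G : Type*} [Group G] {k : ℕ} (H : Fin k → Subgroup G)
    (h1 : ∀ i, H i ≠ ⊤) (h2 : ∀ g : G, ∃ i, ∃ x : G, x * g * x⁻¹ ∈ H i) :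
    normalCoveringNumber G ≤ k :=
  Nat.sInf_le ⟨H, h1, h2⟩

def permMulEquiv {α β : Type*} (e : α ≃ β) : Perm α ≃* Perm β where
  toEquiv := e.permCongr
  map_mul' f g := by ext x; simp [Equiv.permCongr_apply]

lemma ncn_le_of_mulEquiv {G G' : Type*} [Group G] [Group G'] (e : G ≃* G') {k : ℕ}
    (H : Fin k → Subgroup G) (h1 : ∀ i, H i ≠ ⊤)
    (h2 : ∀ g : G, ∃ i, ∃ x : G, x * g * x⁻¹ ∈ H i) :
    normalCoveringNumber G' ≤ k := by
  refine ncn_le (fun i => (H i).map e.toMonoidHom) (fun i h => ?_) (fun g => ?_)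
  · apply h1 i
    rw [eq_top_iff]
    intro y _
    have : e y ∈ (H i).map e.toMonoidHom := by rw [h]; exact Subgroup.mem_top _
    obtain ⟨z, hz, hze⟩ := this
    have : z = y := e.injective hze
    exact this ▸ hz
  · obtain ⟨i, x, hx⟩ := h2 (e.symm g)
    refine ⟨i, e x, ⟨x * e.symm g * x⁻¹, hx, ?_⟩⟩
    simp [map_mul]

def zmodEquivFin (n : ℕ) [NeZero n] : ZMod n ≃ Fin n where
  toFun x := ⟨x.val, ZMod.val_lt x⟩
  invFun i := ((i : ℕ) : ZMod n)
  left_inv x := ZMod.natCast_rightInverse x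
  right_inv i := by ext; simp [ZMod.val_cast_of_lt i.isLt]

section Stab

variable {α : Type*} [DecidableEq α] [Fintype α]

def finsetStab (T : Finset α) : Subgroup (Perm α) where
  carrier := {g | ∀ x ∈ T, g x ∈ T}
  one_mem' := by simp
  mul_mem' := by
    intro a b ha hb x hx
    exact ha _ (hb _ hx)
  inv_mem' := by
    intro g hg x hx
    have himg : T.image g = T := by
      apply Finset.eq_of_subset_of_card_le
      · intro y hy
        obtain ⟨z, hz, rfl⟩ := Finset.mem_image.mp hy
        exact hg z hz
      · rw [Finset.card_image_of_injective _ g.injective]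
    rw [← himg] at hx
    obtain ⟨z, hz, hzx⟩ := Finset.mem_image.mp hx
    have : g⁻¹ x = z := by rw [← hzx]; simp
    rwa [this]

lemma mem_finsetStab {T : Finset α} {g : Perm α} :
    g ∈ finsetStab T ↔ ∀ x ∈ T, g x ∈ T := Iff.rfl

lemma finsetStab_ne_top {T : Finset α} {a b : α} (ha : a ∈ T) (hb : b ∉ T) :
    finsetStab T ≠ ⊤ := by
  intro h
  have hm : Equiv.swap a b ∈ finsetStab T := by rw [h]; exact Subgroup.mem_top _
  have := hm a ha
  rw [Equiv.swap_apply_left] at this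
  exact hb this

lemma conj_mem_finsetStab {g : Perm α} {S T : Finset α}
    (hS : ∀ x ∈ S, g x ∈ S) (hcard : S.card = T.card) :
    ∃ x : Perm α, x * g * x⁻¹ ∈ finsetStab T := by
  classical
  have hc : Sᶜ.card = Tᶜ.card := by
    rw [Finset.card_compl, Finset.card_compl, hcard]
  let e1 : {x // x ∈ S} ≃ {x // x ∈ T} := Finset.equivOfCardEq hcard
  let e2' : {x // x ∈ Sᶜ} ≃ {x // x ∈ Tᶜ} := Finset.equivOfCardEq hc
  let e2 : {x // ¬ x ∈ S} ≃ {x // ¬ x ∈ T} :=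
    ((Equiv.subtypeEquivRight (fun x => (Finset.mem_compl (s := S) (a := x)).symm)).trans
        e2').trans
      (Equiv.subtypeEquivRight (fun x => Finset.mem_compl))
  let u : Perm α := Equiv.subtypeCongr e1 e2
  have hu : ∀ x, x ∈ S ↔ u x ∈ T := by
    intro x
    by_cases hx : x ∈ S
    · have : u x = (e1 ⟨x, hx⟩ : α) := by
        simp [u, Equiv.subtypeCongr, hx]
      rw [this]
      exact iff_of_true hx (e1 ⟨x, hx⟩).2
    · have : u x = (e2 ⟨x, hx⟩ : α) := by
        simp [u, Equiv.subtypeCongr, hx]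
      rw [this]
      exact iff_of_false hx (e2 ⟨x, hx⟩).2
  refine ⟨u, ?_⟩
  intro y hy
  have h1 : u⁻¹ y ∈ S := by
    rw [hu (u⁻¹ y)]
    simpa using hy
  have h2 : g (u⁻¹ y) ∈ S := hS _ h1
  have := (hu _).mp h2
  simpa using this

end Stab

lemma exists_invariant_of_mem_cycleType {α : Type*} [DecidableEq α] [Fintype α]
    {g : Perm α} {ℓ : ℕ} (h : ℓ ∈ g.cycleType) :
    ∃ S : Finset α, (∀ x ∈ S, g x ∈ S) ∧ S.card = ℓ := by
  rw [Equiv.Perm.cycleType_def, Multiset.mem_map] at h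
  obtain ⟨c, hc, hcard⟩ := h
  rw [Finset.mem_val, Equiv.Perm.mem_cycleFactorsFinset_iff] at hc
  refine ⟨c.support, ?_, hcard⟩
  intro x hx
  rw [← hc.2 x hx]
  exact Equiv.Perm.apply_mem_support.mpr hx

section ZModStuff

variable (n : ℕ) [NeZero n]

def Tk (k : ℕ) : Finset (ZMod n) := (Finset.range k).image (Nat.cast : ℕ → ZMod n)

lemma Tk_card {k : ℕ} (h : k ≤ n) : (Tk n k).card = k := by
  rw [Tk, Finset.card_image_of_injOn, Finset.card_range]
  intro a ha b hb hab
  rw [Finset.mem_coe, Finset.mem_range] at ha hb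
  have := congrArg ZMod.val hab
  rwa [ZMod.val_cast_of_lt (lt_of_lt_of_le ha h),
    ZMod.val_cast_of_lt (lt_of_lt_of_le hb h)] at this

lemma Tk_zero_mem {k : ℕ} (h : 1 ≤ k) : (0 : ZMod n) ∈ Tk n k := by
  rw [Tk, Finset.mem_image]
  exact ⟨0, Finset.mem_range.mpr h, by simp⟩

lemma Tk_not_mem {k : ℕ} (h : k < n) : ((k : ℕ) : ZMod n) ∉ Tk n k := by
  rw [Tk, Finset.mem_image]
  rintro ⟨j, hj, hjk⟩
  rw [Finset.mem_range] at hj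
  have := congrArg ZMod.val hjk
  rw [ZMod.val_cast_of_lt (hj.trans h), ZMod.val_cast_of_lt h] at this
  omega

lemma Tk_stab_ne_top {k : ℕ} (h1 : 1 ≤ k) (h2 : k < n) : finsetStab (Tk n k) ≠ ⊤ :=
  finsetStab_ne_top (Tk_zero_mem n h1) (Tk_not_mem n h2)

/-- the basic `n`-cycle `x ↦ x + 1` -/
def ac : Perm (ZMod n) := Equiv.addRight 1

lemma ac_pow (k : ℕ) : (ac n) ^ k = Equiv.addRight ((k : ℕ) : ZMod n) := by
  rw [ac, Equiv.nsmul_addRight, nsmul_eq_mul, mul_one]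

lemma ac_zpow (k : ℤ) : (ac n) ^ k = Equiv.addRight ((k : ℤ) : ZMod n) := by
  rw [ac, Equiv.zsmul_addRight, zsmul_eq_mul, mul_one]

lemma mem_zpowers_ac_iff {g : Perm (ZMod n)} :
    g ∈ Subgroup.zpowers (ac n) ↔ ∃ t : ZMod n, g = Equiv.addRight t := by
  rw [Subgroup.mem_zpowers_iff]
  constructor
  · rintro ⟨k, rfl⟩
    exact ⟨((k : ℤ) : ZMod n), by rw [ac_zpow]⟩
  · rintro ⟨t, rfl⟩
    refine ⟨(t.val : ℤ), ?_⟩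
    rw [ac_zpow]
    congr 1
    push_cast
    exact ZMod.natCast_rightInverse t

lemma ac_isCycle (h1 : (1 : ZMod n) ≠ 0) : (ac n).IsCycle := by
  refine ⟨0, by simpa [ac] using h1, fun y hy => ?_⟩
  refine ⟨(y.val : ℤ), ?_⟩
  rw [ac_zpow]
  push_cast
  simpa using ZMod.natCast_rightInverse y

lemma ac_support (h1 : (1 : ZMod n) ≠ 0) : (ac n).support = Finset.univ := by
  rw [Finset.eq_univ_iff_forall]
  intro x
  rw [Equiv.Perm.mem_support]
  simpa [ac] using h1

lemma ac_cycleType (h1 : (1 : ZMod n) ≠ 0) : (ac n).cycleType = {n} := by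
  rw [(ac_isCycle n h1).cycleType, ac_support n h1]
  simp [ZMod.card]

end ZModStuff

section PrimeCase

variable (n : ℕ) [NeZero n]

def mulPerm (a : (ZMod n)ˣ) : Perm (ZMod n) where
  toFun x := a * x
  invFun x := a⁻¹ * x
  left_inv x := by simp
  right_inv x := by simp

def mulPermHom : (ZMod n)ˣ →* Perm (ZMod n) where
  toFun := mulPerm n
  map_one' := by ext x; simp [mulPerm]
  map_mul' a b := by ext x; simp [mulPerm, mul_assoc]

lemma mulPerm_apply (a : (ZMod n)ˣ) (x : ZMod n) : mulPerm n a x = a * x := rfl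

lemma mulPerm_conj_addRight (a : (ZMod n)ˣ) (t : ZMod n) :
    mulPerm n a * Equiv.addRight t * (mulPerm n a)⁻¹ = Equiv.addRight ((a : ZMod n) * t) := by
  ext x
  have hinv : (mulPerm n a)⁻¹ = mulPerm n a⁻¹ := by
    rw [show mulPerm n a = mulPermHom n a from rfl, ← map_inv]; rfl
  rw [hinv]
  simp only [Equiv.Perm.coe_mul, Function.comp_apply, Equiv.coe_addRight, mulPerm_apply]
  rw [mul_add]
  simp

lemma mulPerm_mem_normalizer (a : (ZMod n)ˣ) :
    mulPerm n a ∈ Subgroup.normalizer (Subgroup.zpowers (ac n) : Set (Perm (ZMod n))) := by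
  rw [Subgroup.mem_normalizer_iff]
  intro h
  rw [mem_zpowers_ac_iff, mem_zpowers_ac_iff]
  constructor
  · rintro ⟨t, rfl⟩
    exact ⟨(a : ZMod n) * t, mulPerm_conj_addRight n a t⟩
  · rintro ⟨t, ht⟩
    refine ⟨(a⁻¹ : (ZMod n)ˣ) * t, ?_⟩
    have := mulPerm_conj_addRight n a⁻¹ t
    rw [← this, ← ht]
    have hinv : (mulPerm n a)⁻¹ = mulPerm n a⁻¹ := by
      rw [show mulPerm n a = mulPermHom n a from rfl, ← map_inv]; rfl
    rw [← hinv]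
    group

end PrimeCase

section PrimeCase2

variable (n : ℕ) [Fact (n.Prime)]

lemma mulPerm_fixed_iff {a : (ZMod n)ˣ} (ha : a ≠ 1) (x : ZMod n) :
    mulPerm n a x = x ↔ x = 0 := by
  rw [mulPerm_apply]
  constructor
  · intro h
    by_contra hx
    have : (a : ZMod n) = 1 := (mul_left_eq_self₀.mp h).resolve_right hx
    exact ha (Units.ext this)
  · rintro rfl; simp

lemma mulPerm_isCycle {a : (ZMod n)ˣ} (ha : a ≠ 1)
    (hgen : ∀ x : (ZMod n)ˣ, x ∈ Subgroup.zpowers a) :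
    (mulPerm n a).IsCycle := by
  have h1 : mulPerm n a 1 ≠ 1 := by
    rw [Ne, mulPerm_fixed_iff n ha]
    exact one_ne_zero
  refine ⟨1, h1, fun y hy => ?_⟩
  have hy0 : y ≠ 0 := by
    intro h
    rw [h] at hy
    exact hy ((mulPerm_fixed_iff n ha 0).mpr rfl)
  have hyu : IsUnit y := isUnit_iff_ne_zero.mpr hy0
  obtain ⟨k, hk⟩ := Subgroup.mem_zpowers_iff.mp (hgen hyu.unit)
  refine ⟨k, ?_⟩
  have : (mulPerm n a) ^ k = mulPerm n (a ^ k) := by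
    rw [show mulPerm n a = mulPermHom n a from rfl, ← map_zpow]; rfl
  rw [this, mulPerm_apply, hk, mul_one, IsUnit.unit_spec]

lemma mulPerm_support {a : (ZMod n)ˣ} (ha : a ≠ 1) :
    (mulPerm n a).support = {(0 : ZMod n)}ᶜ := by
  ext x
  rw [Equiv.Perm.mem_support, Finset.mem_compl, Finset.mem_singleton]
  rw [Ne, mulPerm_fixed_iff n ha]

lemma mulPerm_cycleType {a : (ZMod n)ˣ} (ha : a ≠ 1)
    (hgen : ∀ x : (ZMod n)ˣ, x ∈ Subgroup.zpowers a) :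
    (mulPerm n a).cycleType = {n - 1} := by
  rw [(mulPerm_isCycle n ha hgen).cycleType, mulPerm_support n ha]
  rw [Finset.card_compl]
  simp [ZMod.card]

end PrimeCase2

section RotAll

open Equiv.Perm

variable {α : Type*} [DecidableEq α] [Fintype α]

/-- rotate every cycle of `g` by (its length)/p -/
def rotAll (g : Perm α) (p : ℕ) : Perm α where
  toFun x := (g ^ ((g.cycleOf x).support.card / p)) x
  invFun x := (g ^ ((g.cycleOf x).support.card / p))⁻¹ x
  left_inv x := by
    simp only [cycleOf_self_apply_pow]
    simp
  right_inv x := by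
    have hc : g.cycleOf ((g ^ ((g.cycleOf x).support.card / p))⁻¹ x) = g.cycleOf x := by
      have : (g ^ ((g.cycleOf x).support.card / p))⁻¹
          = g ^ (-(((g.cycleOf x).support.card / p : ℕ) : ℤ)) := by
        rw [zpow_neg, zpow_natCast]
      rw [this, cycleOf_self_apply_zpow]
    show (g ^ ((g.cycleOf ((g ^ ((g.cycleOf x).support.card / p))⁻¹ x)).support.card / p))
        ((g ^ ((g.cycleOf x).support.card / p))⁻¹ x) = x
    rw [hc]
    simp

lemma rotAll_apply (g : Perm α) (p : ℕ) (x : α) :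
    rotAll g p x = (g ^ ((g.cycleOf x).support.card / p)) x := rfl

lemma rotAll_comm (g : Perm α) (p : ℕ) : g * rotAll g p = rotAll g p * g := by
  ext x
  simp only [Equiv.Perm.mul_apply, rotAll_apply, cycleOf_self_apply]
  rw [← Equiv.Perm.mul_apply, ← Equiv.Perm.mul_apply, ← pow_succ, ← pow_succ']

lemma rotAll_pow_apply (g : Perm α) (p : ℕ) (k : ℕ) (x : α) :
    (rotAll g p ^ k) x = (g ^ (k * ((g.cycleOf x).support.card / p))) x := by
  induction k with
  | zero => simp
  | succ k ih =>
    rw [pow_succ', Equiv.Perm.mul_apply, ih, rotAll_apply, cycleOf_self_apply_pow,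
      ← Equiv.Perm.mul_apply, ← pow_add]
    have : (g.cycleOf x).support.card / p + k * ((g.cycleOf x).support.card / p)
        = (k + 1) * ((g.cycleOf x).support.card / p) := by ring
    rw [this]

lemma rotAll_pow_eq_one {g : Perm α} {p : ℕ} (hp : 0 < p)
    (hdvd : ∀ x : α, p ∣ (g.cycleOf x).support.card) :
    rotAll g p ^ p = 1 := by
  ext x
  rw [rotAll_pow_apply, Nat.mul_div_cancel' (hdvd x)]
  have := pow_mod_card_support_cycleOf_self_apply g ((g.cycleOf x).support.card) x
  rw [Nat.mod_self] at this
  rw [← this]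
  simp

lemma rotAll_fpf {g : Perm α} {p : ℕ} (hp : 2 ≤ p)
    (hdvd : ∀ x : α, p ∣ (g.cycleOf x).support.card)
    (hfpf : ∀ x : α, g x ≠ x) (x : α) : rotAll g p x ≠ x := by
  set ℓ := (g.cycleOf x).support.card with hℓ
  have hcyc : (g.cycleOf x).IsCycle := isCycle_cycleOf g (hfpf x)
  have hℓ2 : 2 ≤ ℓ := hcyc.two_le_card_support
  have hepos : 1 ≤ ℓ / p := Nat.one_le_div_iff (by omega) |>.mpr (Nat.le_of_dvd (by omega) (hdvd x))
  have helt : ℓ / p < ℓ := Nat.div_lt_self (by omega) hp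
  rw [rotAll_apply]
  intro heq
  have hcx : (g.cycleOf x) x ≠ x := by
    rw [cycleOf_apply_self]; exact hfpf x
  have h1 : ((g.cycleOf x) ^ (ℓ / p)) x = x := by
    rw [cycleOf_pow_apply_self]; exact heq
  have h2 : (g.cycleOf x) ^ (ℓ / p) = 1 := (hcyc.pow_eq_one_iff' hcx).mpr h1
  have h3 : orderOf (g.cycleOf x) ∣ ℓ / p := orderOf_dvd_of_pow_eq_one h2
  rw [hcyc.orderOf] at h3
  have := Nat.le_of_dvd (by omega) h3
  omega

end RotAll

lemma cycleType_replicate_of_fpf {α : Type*} [DecidableEq α] [Fintype α]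
    {g : Perm α} {p : ℕ} (hp : p.Prime) (hg : g ^ p = 1) (hfpf : ∀ x, g x ≠ x) :
    g.cycleType = Multiset.replicate (Fintype.card α / p) p := by
  have hall : ∀ ℓ ∈ g.cycleType, ℓ = p := by
    intro ℓ hℓ
    have h2 := Equiv.Perm.two_le_of_mem_cycleType hℓ
    have hdvd : ℓ ∣ p := (Equiv.Perm.dvd_of_mem_cycleType hℓ).trans
      (orderOf_dvd_of_pow_eq_one hg)
    rcases (Nat.Prime.eq_one_or_self_of_dvd hp ℓ hdvd) with h | h
    · omega
    · exact h
  have hsupp : g.support = Finset.univ := by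
    rw [Finset.eq_univ_iff_forall]
    intro x
    rw [Equiv.Perm.mem_support]
    exact hfpf x
  have hsum : g.cycleType.sum = Fintype.card α := by
    rw [Equiv.Perm.sum_cycleType, hsupp, Finset.card_univ]
  have hrep : g.cycleType = Multiset.replicate (Multiset.card g.cycleType) p :=
    Multiset.eq_replicate_card.mpr hall
  have hcard : Multiset.card g.cycleType * p = Fintype.card α := by
    have := hsum
    rw [hrep, Multiset.sum_replicate, smul_eq_mul] at this
    omega
  rw [hrep]
  congr 1
  rw [← hcard, Nat.mul_div_cancel _ hp.pos]

lemma zmod_natCast_inj {n : ℕ} [NeZero n] {a b : ℕ} (ha : a < n) (hb : b < n)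
    (h : ((a : ℕ) : ZMod n) = ((b : ℕ) : ZMod n)) : a = b := by
  have := congrArg ZMod.val h
  rwa [ZMod.val_cast_of_lt ha, ZMod.val_cast_of_lt hb] at this

lemma main_prime (n : ℕ) (hn : 5 ≤ n) (hp : n.Prime) :
    ∃ H : Fin ((n - 1) / 2) → Subgroup (Perm (ZMod n)), (∀ i, H i ≠ ⊤) ∧
      ∀ g : Perm (ZMod n), ∃ i, ∃ x, x * g * x⁻¹ ∈ H i := by
  haveI : Fact n.Prime := ⟨hp⟩
  haveI : NeZero n := ⟨by omega⟩
  have hodd : Odd n := hp.odd_of_ne_two (by omega)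
  obtain ⟨m', hm'⟩ := hodd
  set m := (n - 1) / 2 with hm
  have hmval : n = 2 * m + 1 := by omega
  have hm2 : 2 ≤ m := by omega
  have hcast : ∀ a b : ℕ, a < n → b < n → a ≠ b → ((a : ℕ) : ZMod n) ≠ ((b : ℕ) : ZMod n) := by
    intro a b ha hb hab h
    exact hab (zmod_natCast_inj ha hb h)
  have h1z : (1 : ZMod n) ≠ 0 := by
    have := hcast 1 0 (by omega) (by omega) (by omega)
    simpa using this
  set N := Subgroup.normalizer (Subgroup.zpowers (ac n) : Set (Perm (ZMod n))) with hN
  have hNtop : N ≠ ⊤ := by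
    intro htop
    have hmem : Equiv.swap (0 : ZMod n) 1 ∈ N := by rw [htop]; exact Subgroup.mem_top _
    rw [hN, Subgroup.mem_normalizer_iff] at hmem
    have hac : ac n ∈ Subgroup.zpowers (ac n) := Subgroup.mem_zpowers _
    have hconj := (hmem (ac n)).mp hac
    rw [mem_zpowers_ac_iff] at hconj
    obtain ⟨t, ht⟩ := hconj
    have h20 : (2 : ZMod n) ≠ 0 := by
      have := hcast 2 0 (by omega) (by omega) (by omega); simpa using this
    have h21 : (2 : ZMod n) ≠ 1 := by
      have := hcast 2 1 (by omega) (by omega) (by omega); simpa using this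
    have e1 : (Equiv.swap (0 : ZMod n) 1 * ac n * (Equiv.swap (0 : ZMod n) 1)⁻¹) 1 = 0 := by
      simp only [Equiv.swap_inv, Equiv.Perm.mul_apply]
      rw [Equiv.swap_apply_right]
      show Equiv.swap (0 : ZMod n) 1 (0 + 1) = 0
      rw [zero_add, Equiv.swap_apply_right]
    have e0 : (Equiv.swap (0 : ZMod n) 1 * ac n * (Equiv.swap (0 : ZMod n) 1)⁻¹) 0 = 2 := by
      simp only [Equiv.swap_inv, Equiv.Perm.mul_apply]
      rw [Equiv.swap_apply_left]
      show Equiv.swap (0 : ZMod n) 1 (1 + 1) = 2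
      rw [Equiv.swap_apply_of_ne_of_ne (by norm_num [h20]) (by norm_num [h21])]
      norm_num
    rw [ht] at e1 e0
    simp only [Equiv.coe_addRight, zero_add] at e1 e0
    rw [e0] at e1
    have h30 : ((3 : ℕ) : ZMod n) ≠ ((0 : ℕ) : ZMod n) := hcast 3 0 (by omega) (by omega) (by omega)
    apply h30
    push_cast
    linear_combination e1
  refine ⟨fun i => if i.val = 0 then N else finsetStab (Tk n (i.val + 1)), ?_, ?_⟩
  · intro i
    by_cases h0 : i.val = 0
    · simpa [h0] using hNtop
    · have hi := i.isLt
      simpa [h0] using Tk_stab_ne_top n (k := i.val + 1) (by omega) (by omega)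
  · intro g
    by_cases hsmall : ∃ ℓ ∈ g.cycleType, ℓ ≤ m
    · obtain ⟨ℓ, hℓ, hle⟩ := hsmall
      have h2 : 2 ≤ ℓ := Equiv.Perm.two_le_of_mem_cycleType hℓ
      obtain ⟨S, hSinv, hScard⟩ := exists_invariant_of_mem_cycleType hℓ
      obtain ⟨x, hx⟩ := conj_mem_finsetStab hSinv
        (T := Tk n ℓ) (by rw [Tk_card n (by omega)]; exact hScard)
      refine ⟨⟨ℓ - 1, by omega⟩, x, ?_⟩
      have : ℓ - 1 + 1 = ℓ := by omega
      simp only [if_neg (show ¬(ℓ - 1 = 0) by omega), this]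
      exact hx
    · push_neg at hsmall
      have hsum : g.cycleType.sum = g.support.card := Equiv.Perm.sum_cycleType g
      have hsupcard : g.support.card ≤ n := by
        have := Finset.card_le_univ g.support
        rwa [ZMod.card] at this
      have hcard1 : Multiset.card g.cycleType ≤ 1 := by
        by_contra hc
        push_neg at hc
        obtain ⟨a, ha⟩ := Multiset.exists_mem_of_ne_zero
          (show g.cycleType ≠ 0 by intro h; rw [h] at hc; simp at hc)
        have herase : a ::ₘ g.cycleType.erase a = g.cycleType := Multiset.cons_erase ha
        have hcard_erase : 1 ≤ Multiset.card (g.cycleType.erase a) := by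
          have := congrArg Multiset.card herase
          rw [Multiset.card_cons] at this
          omega
        obtain ⟨b, hb⟩ := Multiset.exists_mem_of_ne_zero
          (show g.cycleType.erase a ≠ 0 by
            intro h; rw [h] at hcard_erase; simp at hcard_erase)
        have hble : b ≤ (g.cycleType.erase a).sum := Multiset.le_sum_of_mem hb
        have hsum2 : a + (g.cycleType.erase a).sum = g.cycleType.sum := by
          conv_rhs => rw [← herase]
          rw [Multiset.sum_cons]
        have hagt : m < a := hsmall a ha
        have hbgt : m < b := hsmall b (Multiset.mem_of_mem_erase hb)
        omega
      interval_cases hcc : (Multiset.card g.cycleType)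
      · -- g = 1
        have hg1 : g = 1 := Equiv.Perm.card_cycleType_eq_zero.mp hcc
        have h01 : (0 : ZMod n) ≠ 1 := fun h => h1z h.symm
        have hScard : ({(0 : ZMod n), 1} : Finset (ZMod n)).card = 2 := by
          rw [Finset.card_insert_of_notMem (by simpa using h01), Finset.card_singleton]
        obtain ⟨x, hx⟩ := conj_mem_finsetStab (g := g)
          (S := {(0 : ZMod n), 1}) (fun y hy => by rw [hg1]; simpa using hy)
          (T := Tk n 2) (by rw [Tk_card n (by omega), hScard])
        refine ⟨⟨1, by omega⟩, x, ?_⟩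
        simpa using hx
      · -- g is a cycle of some length L > m
        obtain ⟨L, hL⟩ := Multiset.card_eq_one.mp hcc
        have hLmem : L ∈ g.cycleType := by rw [hL]; exact Multiset.mem_singleton_self L
        have hLgt : m < L := hsmall L hLmem
        have hLsup : L = g.support.card := by
          rw [← hsum, hL, Multiset.sum_singleton]
        rcases show L ≤ n - 2 ∨ L = n - 1 ∨ L = n by omega with hc | hc | hc
        · -- at least two fixed points
          have hcompl : 2 ≤ g.supportᶜ.card := by
            rw [Finset.card_compl, ZMod.card]
            omega
          obtain ⟨a, ha, b, hb, hab⟩ := Finset.one_lt_card.mp hcompl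
          rw [Finset.mem_compl, Equiv.Perm.notMem_support] at ha hb
          have hScard : ({a, b} : Finset (ZMod n)).card = 2 := by
            rw [Finset.card_insert_of_notMem (by simpa using hab), Finset.card_singleton]
          obtain ⟨x, hx⟩ := conj_mem_finsetStab (g := g) (S := {a, b})
            (fun y hy => by
              rcases Finset.mem_insert.mp hy with rfl | hy
              · rw [ha]; exact Finset.mem_insert_self _ _
              · rw [Finset.mem_singleton.mp hy, hb]
                exact Finset.mem_insert_of_mem (Finset.mem_singleton_self _))
            (T := Tk n 2) (by rw [Tk_card n (by omega), hScard])
          refine ⟨⟨1, by omega⟩, x, ?_⟩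
          simpa using hx
        · -- L = n - 1 : conjugate to mulPerm of a generator
          obtain ⟨a, hgen⟩ := IsCyclic.exists_generator (α := (ZMod n)ˣ)
          have hane : a ≠ 1 := by
            intro h1
            obtain ⟨k, hk⟩ := Subgroup.mem_zpowers_iff.mp (hgen (-1))
            rw [h1, one_zpow] at hk
            have hval := congrArg (fun u : (ZMod n)ˣ => (u : ZMod n)) hk
            simp only [Units.val_one, Units.val_neg] at hval
            have h2z : ((2 : ℕ) : ZMod n) ≠ ((0 : ℕ) : ZMod n) :=
              hcast 2 0 (by omega) (by omega) (by omega)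
            apply h2z
            push_cast
            linear_combination hval
          have hw : (mulPerm n a).cycleType = g.cycleType := by
            rw [mulPerm_cycleType n hane hgen, hL, hc]
          obtain ⟨c, hc2⟩ := Equiv.Perm.isConj_iff_cycleType_eq.mpr hw
          set cc := (c : Perm (ZMod n)) with hccdef
          have hcc : cc * mulPerm n a = g * cc := hc2
          refine ⟨⟨0, by omega⟩, cc⁻¹, ?_⟩
          show cc⁻¹ * g * cc⁻¹⁻¹ ∈ N
          have hg : cc * mulPerm n a * cc⁻¹ = g := by rw [hcc]; group
          have : cc⁻¹ * g * cc⁻¹⁻¹ = mulPerm n a := by rw [← hg]; group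
          rw [this]
          exact mulPerm_mem_normalizer n a
        · -- L = n : conjugate to ac n
          have hw : (ac n).cycleType = g.cycleType := by
            rw [ac_cycleType n h1z, hL, hc]
          obtain ⟨c, hc2⟩ := Equiv.Perm.isConj_iff_cycleType_eq.mpr hw
          set cc := (c : Perm (ZMod n)) with hccdef
          have hcc : cc * ac n = g * cc := hc2
          refine ⟨⟨0, by omega⟩, cc⁻¹, ?_⟩
          show cc⁻¹ * g * cc⁻¹⁻¹ ∈ N
          have hg : cc * ac n * cc⁻¹ = g := by rw [hcc]; group
          have : cc⁻¹ * g * cc⁻¹⁻¹ = ac n := by rw [← hg]; group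
          rw [this]
          exact Subgroup.le_normalizer (Subgroup.mem_zpowers _)

lemma card_support_cycleOf_mem_cycleType' {α : Type*} [DecidableEq α] [Fintype α]
    {g : Perm α} {x : α} (hx : g x ≠ x) :
    (g.cycleOf x).support.card ∈ g.cycleType := by
  rw [Equiv.Perm.cycleType_def]
  apply Multiset.mem_map_of_mem
  rw [Finset.mem_val]
  exact Equiv.Perm.cycleOf_mem_cycleFactorsFinset_iff.mpr (Equiv.Perm.mem_support.mpr hx)

lemma main_composite (n : ℕ) (hn : 5 ≤ n) (ho : Odd n) (hnp : ¬ n.Prime) :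
    ∃ H : Fin ((n - 1) / 2) → Subgroup (Perm (ZMod n)), (∀ i, H i ≠ ⊤) ∧
      ∀ g : Perm (ZMod n), ∃ i, ∃ x, x * g * x⁻¹ ∈ H i := by
  haveI : NeZero n := ⟨by omega⟩
  obtain ⟨m', hm'⟩ := ho
  set m := (n - 1) / 2 with hm
  have hmval : n = 2 * m + 1 := by omega
  set p := n.minFac with hpdef
  have hp : p.Prime := Nat.minFac_prime (by omega)
  have hpdvd : p ∣ n := Nat.minFac_dvd n
  have hp2 : p ≠ 2 := by
    intro h2
    rw [h2] at hpdvd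
    omega
  have hp3 : 3 ≤ p := by
    have := hp.two_le
    omega
  set b := n / p with hb
  have hpb : p * b = n := Nat.mul_div_cancel' hpdvd
  have hple : p ≤ b := Nat.minFac_le_div (by omega) hnp
  have hpm : p ≤ m := by
    have hsq : p * p ≤ p * b := Nat.mul_le_mul_left p hple
    nlinarith
  have hbn : b < n := by nlinarith
  have hb3 : 3 ≤ b := le_trans hp3 hple
  have hcast : ∀ a c : ℕ, a < n → c < n → a ≠ c → ((a : ℕ) : ZMod n) ≠ ((c : ℕ) : ZMod n) := by
    intro a c ha hc hac h
    exact hac (zmod_natCast_inj ha hc h)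
  -- the special fixed-point-free element of order p
  set z : Perm (ZMod n) := (ac n) ^ b with hz
  have hz_eq : z = Equiv.addRight ((b : ℕ) : ZMod n) := by rw [hz, ac_pow]
  have hb0 : ((b : ℕ) : ZMod n) ≠ 0 := by
    have := hcast b 0 hbn (by omega) (by omega)
    simpa using this
  have hz_fpf : ∀ x : ZMod n, z x ≠ x := by
    intro x h
    rw [hz_eq] at h
    simp only [Equiv.coe_addRight] at h
    exact hb0 (by linear_combination h)
  have hz_pow : z ^ p = 1 := by
    rw [hz, ← pow_mul]
    have : b * p = n := by rw [mul_comm]; exact hpb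
    rw [this, ac_pow]
    ext x
    simp [ZMod.natCast_self]
  have hz_ct : z.cycleType = Multiset.replicate (n / p) p := by
    have := cycleType_replicate_of_fpf hp hz_pow hz_fpf
    rwa [ZMod.card] at this
  set Z : Subgroup (Perm (ZMod n)) := Subgroup.centralizer {z} with hZ
  have hZtop : Z ≠ ⊤ := by
    intro htop
    have hmem : Equiv.swap (0 : ZMod n) 1 ∈ Z := by rw [htop]; exact Subgroup.mem_top _
    rw [hZ, Subgroup.mem_centralizer_iff] at hmem
    have := hmem z (Set.mem_singleton z)
    have heval := congrArg (fun f : Perm (ZMod n) => f 0) this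
    simp only [Equiv.Perm.mul_apply] at heval
    rw [hz_eq] at heval
    simp only [Equiv.coe_addRight] at heval
    -- heval : (swap 0 1) (0 + b) = (swap 0 1 0) + b  i.e. swap(b) = 1 + b
    have hb1 : ((b : ℕ) : ZMod n) ≠ 1 := by
      have := hcast b 1 hbn (by omega) (by omega)
      simpa using this
    rw [zero_add, Equiv.swap_apply_left,
      Equiv.swap_apply_of_ne_of_ne hb0 hb1] at heval
    have h1 : (1 : ZMod n) = 0 := by linear_combination heval
    have := hcast 1 0 (by omega) (by omega) (by omega)
    simp at this
    exact this (by exact_mod_cast h1)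
  refine ⟨fun i => if i.val = 0 then Z
    else finsetStab (Tk n (if i.val < p then i.val else i.val + 1)), ?_, ?_⟩
  · intro i
    by_cases h0 : i.val = 0
    · simpa [h0] using hZtop
    · have hi := i.isLt
      by_cases hip : i.val < p
      · simpa [h0, hip] using Tk_stab_ne_top n (k := i.val) (by omega) (by omega)
      · simpa [h0, hip] using Tk_stab_ne_top n (k := i.val + 1) (by omega) (by omega)
  · intro g
    by_cases hfix : ∃ x, g x = x
    · obtain ⟨x0, hx0⟩ := hfix
      obtain ⟨x, hx⟩ := conj_mem_finsetStab (g := g) (S := {x0})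
        (fun y hy => by rw [Finset.mem_singleton] at hy; subst hy; simp [hx0])
        (T := Tk n 1) (by rw [Tk_card n (by omega), Finset.card_singleton])
      refine ⟨⟨1, by omega⟩, x, ?_⟩
      have h1p : (1 : ℕ) < p := by omega
      simp only [if_neg (by omega : ¬(1 : ℕ) = 0), if_pos h1p]
      exact hx
    · push_neg at hfix
      by_cases hsmall : ∃ ℓ ∈ g.cycleType, ℓ ≤ m ∧ ℓ ≠ p
      · obtain ⟨ℓ, hℓ, hle, hℓp⟩ := hsmall
        have h2 : 2 ≤ ℓ := Equiv.Perm.two_le_of_mem_cycleType hℓ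
        obtain ⟨S, hSinv, hScard⟩ := exists_invariant_of_mem_cycleType hℓ
        obtain ⟨x, hx⟩ := conj_mem_finsetStab hSinv
          (T := Tk n ℓ) (by rw [Tk_card n (by omega)]; exact hScard)
        by_cases hℓlt : ℓ < p
        · refine ⟨⟨ℓ, by omega⟩, x, ?_⟩
          simp only [if_neg (by omega : ¬ℓ = 0), if_pos hℓlt]
          exact hx
        · refine ⟨⟨ℓ - 1, by omega⟩, x, ?_⟩
          have hnp' : ¬(ℓ - 1 < p) := by omega
          have : ℓ - 1 + 1 = ℓ := by omega
          simp only [if_neg (by omega : ¬ℓ - 1 = 0), if_neg hnp', this]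
          exact hx
      · -- all cycle lengths are p or > m; derive p ∣ every cycle length
        push_neg at hsmall
        have hsum : g.cycleType.sum = g.support.card := Equiv.Perm.sum_cycleType g
        have hsupp : g.support = Finset.univ := by
          rw [Finset.eq_univ_iff_forall]
          intro x
          exact Equiv.Perm.mem_support.mpr (hfix x)
        have hsuppn : g.support.card = n := by rw [hsupp, Finset.card_univ, ZMod.card]
        have hdvd : ∀ ℓ ∈ g.cycleType, p ∣ ℓ := by
          intro ℓ hℓ
          by_cases hle : ℓ ≤ m
          · rw [hsmall ℓ hℓ hle]
          · push_neg at hle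
            have herase : ℓ ::ₘ g.cycleType.erase ℓ = g.cycleType := Multiset.cons_erase hℓ
            have hsum2 : ℓ + (g.cycleType.erase ℓ).sum = g.cycleType.sum := by
              conv_rhs => rw [← herase]
              rw [Multiset.sum_cons]
            have hrest : ∀ ℓ' ∈ g.cycleType.erase ℓ, ℓ' = p := by
              intro ℓ' hℓ'
              have hℓ'mem : ℓ' ∈ g.cycleType := Multiset.mem_of_mem_erase hℓ'
              by_cases h : ℓ' ≤ m
              · exact hsmall ℓ' hℓ'mem h
              · push_neg at h
                have : ℓ' ≤ (g.cycleType.erase ℓ).sum := Multiset.le_sum_of_mem hℓ'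
                omega
            have hrep : g.cycleType.erase ℓ =
                Multiset.replicate (Multiset.card (g.cycleType.erase ℓ)) p :=
              Multiset.eq_replicate_card.mpr hrest
            have hrsum : p ∣ (g.cycleType.erase ℓ).sum := by
              rw [hrep, Multiset.sum_replicate, smul_eq_mul]
              exact dvd_mul_left p _
            have hn' : p ∣ ℓ + (g.cycleType.erase ℓ).sum := by
              rw [hsum2, hsum, hsuppn]
              exact hpdvd
            exact (Nat.dvd_add_iff_left hrsum).mpr hn'
        have hdvdx : ∀ x : ZMod n, p ∣ (g.cycleOf x).support.card := by
          intro x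
          exact hdvd _ (card_support_cycleOf_mem_cycleType' (hfix x))
        set z' := rotAll g p with hz'
        have hcomm : g * z' = z' * g := rotAll_comm g p
        have hz'_pow : z' ^ p = 1 := rotAll_pow_eq_one hp.pos hdvdx
        have hz'_fpf : ∀ x, z' x ≠ x := rotAll_fpf hp.two_le hdvdx hfix
        have hz'_ct : z'.cycleType = Multiset.replicate (n / p) p := by
          have := cycleType_replicate_of_fpf hp hz'_pow hz'_fpf
          rwa [ZMod.card] at this
        have hconj : IsConj z z' := by
          rw [Equiv.Perm.isConj_iff_cycleType_eq, hz_ct, hz'_ct]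
        obtain ⟨c, hc2⟩ := hconj
        set cc := (c : Perm (ZMod n)) with hccdef
        have hcc : cc * z = z' * cc := hc2
        refine ⟨⟨0, by omega⟩, cc⁻¹, ?_⟩
        show cc⁻¹ * g * cc⁻¹⁻¹ ∈ Z
        rw [hZ, Subgroup.mem_centralizer_iff]
        intro h hh
        rw [Set.mem_singleton_iff] at hh
        subst hh
        have hzc : z = cc⁻¹ * z' * cc := by rw [mul_assoc, ← hcc]; group
        rw [inv_inv]
        calc z * (cc⁻¹ * g * cc) = cc⁻¹ * (z' * g) * cc := by rw [hzc]; group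
          _ = cc⁻¹ * (g * z') * cc := by rw [hcomm]
          _ = (cc⁻¹ * g * cc) * z := by rw [hzc]; group

theorem gamma_sym_odd_upper (n : ℕ) (hn : 5 ≤ n) (ho : Odd n) :
    normalCoveringNumber (Equiv.Perm (Fin n)) ≤ (n - 1) / 2 := by
  haveI : NeZero n := ⟨by omega⟩
  obtain ⟨H, h1, h2⟩ :
      ∃ H : Fin ((n - 1) / 2) → Subgroup (Perm (ZMod n)), (∀ i, H i ≠ ⊤) ∧
        ∀ g : Perm (ZMod n), ∃ i, ∃ x, x * g * x⁻¹ ∈ H i := by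
    by_cases hp : n.Prime
    · exact main_prime n hn hp
    · exact main_composite n hn ho hp
  exact ncn_le_of_mulEquiv (permMulEquiv (zmodEquivFin n)) H h1 h2
end

section
/- For the alternating group A_n: if n ≥ 5 is odd then γ(A_n) ≤ ⌊(n+3)/3⌋, and if n ≥ 4 is even then γ(A_n) ≤ ⌊(n+4)/4⌋. -/
open Equiv Equiv.Perm Finset
open scoped Pointwise

namespace GammaAlt

variable {n : ℕ}

lemma ncn_le_of_cover {k : ℕ} (K : Fin k → Subgroup (Perm (Fin n)))
    (hprop : ∀ i, ∃ g ∈ alternatingGroup (Fin n), g ∉ K i)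
    (hcov : ∀ σ ∈ alternatingGroup (Fin n), ∃ i, ∃ x ∈ alternatingGroup (Fin n),
      x * σ * x⁻¹ ∈ K i) :
    normalCoveringNumber (alternatingGroup (Fin n)) ≤ k := by
  apply Nat.sInf_le
  refine ⟨fun i => (K i).subgroupOf _, fun i => ?_, fun g => ?_⟩
  · intro htop
    obtain ⟨g, hg, hgK⟩ := hprop i
    exact hgK (Subgroup.subgroupOf_eq_top.mp htop hg)
  · obtain ⟨i, x, hx, hmem⟩ := hcov g g.2
    exact ⟨i, ⟨x, hx⟩, by simpa [Subgroup.mem_subgroupOf] using hmem⟩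

lemma exists_even_smul_eq {s t : Finset (Fin n)} (hcard : s.card = t.card)
    (hsmall : s.card + 2 ≤ n) :
    ∃ x : Perm (Fin n), x ∈ alternatingGroup (Fin n) ∧ x • s = t := by
  classical
  have hcard1 : Fintype.card {x // x ∈ s} = Fintype.card {x // x ∈ t} := by
    simp [Fintype.card_coe, hcard]
  have hcard2 : Fintype.card {x : Fin n // ¬ x ∈ s} = Fintype.card {x : Fin n // ¬ x ∈ t} := by
    rw [Fintype.card_subtype_compl, Fintype.card_subtype_compl]
    simp [Fintype.card_coe, hcard]
  set e₁ : {x // x ∈ s} ≃ {x // x ∈ t} := Fintype.equivOfCardEq hcard1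
  set e₂ : {x : Fin n // ¬ x ∈ s} ≃ {x : Fin n // ¬ x ∈ t} := Fintype.equivOfCardEq hcard2
  set y : Perm (Fin n) :=
    ((Equiv.sumCompl (· ∈ s)).symm.trans ((e₁.sumCongr e₂).trans (Equiv.sumCompl (· ∈ t))))
    with hy_def
  have hy : ∀ a ∈ s, y a ∈ t := by
    intro a ha
    have : y a = ↑(e₁ ⟨a, ha⟩) := by
      simp [hy_def, Equiv.sumCompl_symm_apply_of_pos ha]
    rw [this]
    exact (e₁ ⟨a, ha⟩).2
  have himg : ∀ z : Perm (Fin n), (∀ a ∈ s, z a ∈ t) → z • s = t := by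
    intro z hz
    apply Finset.eq_of_subset_of_card_le
    · intro b hb
      rw [Finset.mem_smul_finset] at hb
      obtain ⟨a, ha, rfl⟩ := hb
      exact hz a ha
    · rw [Finset.card_smul_finset, hcard]
  rcases Int.units_eq_one_or (Perm.sign y) with hsy | hsy
  · exact ⟨y, mem_alternatingGroup.mpr hsy, himg y hy⟩
  · have hc : 1 < sᶜ.card := by
      rw [Finset.card_compl]
      simp only [Fintype.card_fin]
      omega
    obtain ⟨u, hu, v, hv, huv⟩ := Finset.one_lt_card.mp hc
    rw [Finset.mem_compl] at hu hv
    refine ⟨y * Equiv.swap u v, ?_, ?_⟩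
    · rw [mem_alternatingGroup, map_mul, hsy, Perm.sign_swap huv]
      norm_num
    · apply himg
      intro a ha
      have hau : a ≠ u := fun h => hu (h ▸ ha)
      have hav : a ≠ v := fun h => hv (h ▸ ha)
      simp only [Perm.mul_apply, Equiv.swap_apply_of_ne_of_ne hau hav]
      exact hy a ha

lemma stab_cover {σ : Perm (Fin n)} {s t : Finset (Fin n)} (hst : s.card = t.card)
    (hsmall : s.card + 2 ≤ n) (hinv : σ • s = s) :
    ∃ x ∈ alternatingGroup (Fin n),
      x * σ * x⁻¹ ∈ MulAction.stabilizer (Perm (Fin n)) t := by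
  obtain ⟨x, hx, hxs⟩ := exists_even_smul_eq hst hsmall
  refine ⟨x, hx, ?_⟩
  rw [MulAction.mem_stabilizer_iff, mul_smul, mul_smul, inv_smul_eq_iff.mpr hxs.symm, hinv, hxs]

lemma stab_proper {t : Finset (Fin n)} (h1 : 1 ≤ t.card) (h2 : t.card + 2 ≤ n) :
    ∃ g ∈ alternatingGroup (Fin n), g ∉ MulAction.stabilizer (Perm (Fin n)) t := by
  obtain ⟨u, hu⟩ := Finset.card_pos.mp h1
  have hc : 1 < tᶜ.card := by
    rw [Finset.card_compl]; simp only [Fintype.card_fin]; omega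
  obtain ⟨v, hv, w, hw, hvw⟩ := Finset.one_lt_card.mp hc
  rw [Finset.mem_compl] at hv hw
  have huv : u ≠ v := fun h => hv (h ▸ hu)
  have huw : u ≠ w := fun h => hw (h ▸ hu)
  refine ⟨Equiv.swap u v * Equiv.swap v w, ?_, ?_⟩
  · rw [mem_alternatingGroup, map_mul, Perm.sign_swap huv, Perm.sign_swap hvw]
    norm_num
  · intro hmem
    rw [MulAction.mem_stabilizer_iff] at hmem
    have : v ∈ t := by
      have hvmem : (Equiv.swap u v * Equiv.swap v w) • u ∈
          (Equiv.swap u v * Equiv.swap v w) • t := Finset.smul_mem_smul_finset hu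
      rw [hmem] at hvmem
      have : (Equiv.swap u v * Equiv.swap v w) • u = v := by
        simp only [Perm.smul_def, Perm.mul_apply]
        rw [Equiv.swap_apply_of_ne_of_ne huv huw, Equiv.swap_apply_left]
      rwa [this] at hvmem
    exact hv this


/-- helper: a permutation mapping a finset into itself stabilizes it -/
lemma perm_smul_finset_self (z : Perm (Fin n)) (s : Finset (Fin n))
    (h : ∀ a ∈ s, z a ∈ s) : z • s = s := by
  apply Finset.eq_of_subset_of_card_le
  · intro b hb
    rw [Finset.mem_smul_finset] at hb
    obtain ⟨a, ha, rfl⟩ := hb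
    exact h a ha
  · rw [Finset.card_smul_finset]

/-- a transposition (a, τ a) commutes with an involution τ -/
lemma swap_commute_involution (τ : Perm (Fin n)) (h2 : τ * τ = 1) {a : Fin n} (ha : τ a ≠ a) :
    Commute (Equiv.swap a (τ a)) τ := by
  have hττ : ∀ x, τ (τ x) = x := fun x => by
    have := congrArg (fun f : Perm (Fin n) => f x) h2
    simpa using this
  ext x
  simp only [Perm.mul_apply]
  rcases eq_or_ne x a with rfl | hxa
  · rw [Equiv.swap_apply_left, hττ, Equiv.swap_apply_right]
  rcases eq_or_ne x (τ a) with rfl | hxt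
  · rw [Equiv.swap_apply_right, hττ, Equiv.swap_apply_left]
  · have h1 : τ x ≠ a := fun h => hxt (by rw [← h, hττ])
    have h2' : τ x ≠ τ a := fun h => hxa (τ.injective h)
    rw [Equiv.swap_apply_of_ne_of_ne hxa hxt, Equiv.swap_apply_of_ne_of_ne h1 h2']

/-- cycle type of a fixed-point-free involution -/
lemma cycleType_fpf_involution (hn : 0 < n) {τ : Perm (Fin n)} (h2 : τ * τ = 1)
    (hfpf : ∀ x, τ x ≠ x) : τ.cycleType = Multiset.replicate (n / 2) 2 ∧ n % 2 = 0 := by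
  have hne : τ ≠ 1 := by
    intro h
    exact hfpf ⟨0, hn⟩ (by rw [h]; rfl)
  have horder : orderOf τ = 2 := by
    apply orderOf_eq_prime _ hne
    · rw [pow_two]; exact h2
  obtain ⟨m, hm⟩ := cycleType_prime_order (by rw [horder]; exact Nat.prime_two)
  rw [horder] at hm
  have hsupp : τ.support = Finset.univ := by
    ext x; simp [Perm.mem_support, hfpf x]
  have hsum : τ.cycleType.sum = n := by
    rw [sum_cycleType, hsupp, Finset.card_univ, Fintype.card_fin]
  rw [hm, Multiset.sum_replicate, smul_eq_mul] at hsum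
  constructor
  · rw [hm]; congr 1; omega
  · omega

lemma revPerm_sq : (Fin.revPerm : Perm (Fin n)) * Fin.revPerm = 1 := by
  ext x; simp

lemma revPerm_fpf (hne : Even n) (x : Fin n) : (Fin.revPerm : Perm (Fin n)) x ≠ x := by
  intro h
  have hx := x.2
  have : n - (x.val + 1) = x.val := by
    have := congrArg Fin.val h
    simpa [Fin.val_rev] using this
  obtain ⟨m, rfl⟩ := hne
  omega

/-- covering lemma for the centralizer of revPerm -/
lemma cent_rev_cover (hn : 0 < n) (hne : Even n) {σ τ : Perm (Fin n)} (h2 : τ * τ = 1)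
    (hfpf : ∀ x, τ x ≠ x) (hcomm : Commute σ τ) :
    ∃ x ∈ alternatingGroup (Fin n),
      x * σ * x⁻¹ ∈ Subgroup.centralizer {(Fin.revPerm : Perm (Fin n))} := by
  set τ₀ : Perm (Fin n) := Fin.revPerm with hτ₀
  have hct : τ.cycleType = τ₀.cycleType := by
    rw [(cycleType_fpf_involution hn h2 hfpf).1,
      (cycleType_fpf_involution hn revPerm_sq (revPerm_fpf hne)).1]
  obtain ⟨z, hzconj⟩ := isConj_iff.mp (isConj_iff_cycleType_eq.mpr hct)
  -- hzconj : z * τ * z⁻¹ = τ₀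
  have hmem : z * σ * z⁻¹ ∈ Subgroup.centralizer {τ₀} := by
    rw [Subgroup.mem_centralizer_iff]
    intro h hh
    rw [Set.mem_singleton_iff] at hh
    subst hh
    rw [← hzconj]
    have hts : τ * σ = σ * τ := hcomm.symm
    calc z * τ * z⁻¹ * (z * σ * z⁻¹) = z * (τ * σ) * z⁻¹ := by group
    _ = z * (σ * τ) * z⁻¹ := by rw [hts]
    _ = z * σ * z⁻¹ * (z * τ * z⁻¹) := by group
  have ha0 : τ₀ (⟨0, hn⟩ : Fin n) ≠ ⟨0, hn⟩ := revPerm_fpf hne _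
  have hswap_mem : Equiv.swap ⟨0, hn⟩ (τ₀ ⟨0, hn⟩) ∈ Subgroup.centralizer {τ₀} := by
    rw [Subgroup.mem_centralizer_iff]
    intro h hh
    rw [Set.mem_singleton_iff] at hh
    subst hh
    exact (swap_commute_involution τ₀ revPerm_sq ha0).symm
  rcases Int.units_eq_one_or (Perm.sign z) with hsz | hsz
  · exact ⟨z, mem_alternatingGroup.mpr hsz, hmem⟩
  · set s := Equiv.swap (⟨0, hn⟩ : Fin n) (τ₀ ⟨0, hn⟩) with hs
    refine ⟨s * z, ?_, ?_⟩
    · rw [mem_alternatingGroup, map_mul, hsz, Perm.sign_swap ha0.symm]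
      norm_num
    · have : s * z * σ * (s * z)⁻¹ = s * (z * σ * z⁻¹) * s⁻¹ := by group
      rw [this]
      exact Subgroup.mul_mem _ (Subgroup.mul_mem _ hswap_mem hmem) (Subgroup.inv_mem _ hswap_mem)

/-- properness of the centralizer of revPerm -/
lemma cent_rev_proper (hn : 4 ≤ n) :
    ∃ g ∈ alternatingGroup (Fin n),
      g ∉ Subgroup.centralizer {(Fin.revPerm : Perm (Fin n))} := by
  have h0 : 0 < n := by omega
  have h1 : 1 < n := by omega
  have h2n : 2 < n := by omega
  have h3n : n - 1 < n := by omega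
  have h4n : n - 3 < n := by omega
  have hab : (⟨0, h0⟩ : Fin n) ≠ ⟨1, h1⟩ := by simp [Fin.ext_iff]
  have hac : (⟨0, h0⟩ : Fin n) ≠ ⟨2, h2n⟩ := by simp [Fin.ext_iff]
  have hbc : (⟨1, h1⟩ : Fin n) ≠ ⟨2, h2n⟩ := by simp [Fin.ext_iff]
  have had : (⟨0, h0⟩ : Fin n) ≠ ⟨n - 1, h3n⟩ := by simp [Fin.ext_iff]; omega
  have hbd : (⟨1, h1⟩ : Fin n) ≠ ⟨n - 1, h3n⟩ := by simp [Fin.ext_iff]; omega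
  have hcd : (⟨2, h2n⟩ : Fin n) ≠ ⟨n - 1, h3n⟩ := by simp [Fin.ext_iff]; omega
  refine ⟨Equiv.swap ⟨0, h0⟩ ⟨1, h1⟩ * Equiv.swap ⟨0, h0⟩ ⟨2, h2n⟩, ?_, ?_⟩
  · rw [mem_alternatingGroup, map_mul, Perm.sign_swap hab, Perm.sign_swap hac]
    norm_num
  · intro hmem
    rw [Subgroup.mem_centralizer_iff] at hmem
    have hcm := hmem Fin.revPerm (Set.mem_singleton _)
    have heval := congrArg (fun f : Perm (Fin n) => f ⟨0, h0⟩) hcm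
    simp only [Perm.mul_apply] at heval
    have e1 : (Equiv.swap (⟨0, h0⟩ : Fin n) ⟨2, h2n⟩) ⟨0, h0⟩ = ⟨2, h2n⟩ :=
      Equiv.swap_apply_left _ _
    have e2 : (Equiv.swap (⟨0, h0⟩ : Fin n) ⟨1, h1⟩) ⟨2, h2n⟩ = ⟨2, h2n⟩ :=
      Equiv.swap_apply_of_ne_of_ne hac.symm hbc.symm
    have e3 : (Fin.revPerm : Perm (Fin n)) ⟨2, h2n⟩ = ⟨n - 3, h4n⟩ := by
      rw [Fin.ext_iff]
      simp [Fin.val_rev]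
    have e4 : (Fin.revPerm : Perm (Fin n)) ⟨0, h0⟩ = ⟨n - 1, h3n⟩ := by
      rw [Fin.ext_iff]
      simp [Fin.val_rev]
    have e5 : (Equiv.swap (⟨0, h0⟩ : Fin n) ⟨2, h2n⟩) ⟨n - 1, h3n⟩ = ⟨n - 1, h3n⟩ :=
      Equiv.swap_apply_of_ne_of_ne had.symm hcd.symm
    have e6 : (Equiv.swap (⟨0, h0⟩ : Fin n) ⟨1, h1⟩) ⟨n - 1, h3n⟩ = ⟨n - 1, h3n⟩ :=
      Equiv.swap_apply_of_ne_of_ne had.symm hbd.symm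
    rw [e1, e2, e3, e4, e5, e6, Fin.ext_iff] at heval
    simp only at heval
    omega


/-- If all cycles of a fixed-point-free σ have even length, σ commutes with a
fixed-point-free involution. -/
lemma exists_invol_of_all_even {σ : Perm (Fin n)} (hfpf : ∀ x, σ x ≠ x)
    (heven : ∀ a ∈ σ.cycleType, Even a) :
    ∃ τ : Perm (Fin n), τ * τ = 1 ∧ (∀ x, τ x ≠ x) ∧ Commute σ τ := by
  classical
  set f : Fin n → Fin n := fun x => (σ ^ ((σ.cycleOf x).support.card / 2)) x with hf
  have hcyc : ∀ x : Fin n, (σ.cycleOf x).IsCycle := fun x => isCycle_cycleOf σ (hfpf x)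
  have hkmem : ∀ x : Fin n, (σ.cycleOf x).support.card ∈ σ.cycleType := by
    intro x
    rw [cycleType_def, Multiset.mem_map]
    exact ⟨σ.cycleOf x, by
      rw [← Finset.mem_def, cycleOf_mem_cycleFactorsFinset_iff, mem_support]; exact hfpf x, rfl⟩
  have hkeven : ∀ x : Fin n, Even ((σ.cycleOf x).support.card) := fun x => heven _ (hkmem x)
  have hk2 : ∀ x : Fin n, 2 ≤ (σ.cycleOf x).support.card := fun x =>
    (hcyc x).two_le_card_support
  have hkpow : ∀ x : Fin n, (σ ^ ((σ.cycleOf x).support.card)) x = x := by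
    intro x
    have : (σ.cycleOf x) ^ ((σ.cycleOf x).support.card) = 1 := by
      rw [← (hcyc x).orderOf]
      exact pow_orderOf_eq_one _
    have h2 := congrArg (fun g : Perm (Fin n) => g x) this
    simpa [cycleOf_pow_apply_self] using h2
  have hsame : ∀ (x : Fin n) (m : ℕ), σ.cycleOf ((σ ^ m) x) = σ.cycleOf x := fun x m =>
    cycleOf_self_apply_pow σ m x
  have hinv : Function.Involutive f := by
    intro x
    have hc := hsame x ((σ.cycleOf x).support.card / 2)
    rw [hf]
    simp only [hc]
    rw [← Perm.mul_apply, ← pow_add]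
    have : (σ.cycleOf x).support.card / 2 + (σ.cycleOf x).support.card / 2
        = (σ.cycleOf x).support.card := by
      obtain ⟨m, hm⟩ := hkeven x
      omega
    rw [this]
    exact hkpow x
  have hffp : ∀ x, f x ≠ x := by
    intro x hx
    have hcx : (σ.cycleOf x) x ≠ x := by
      rw [cycleOf_apply_self]; exact hfpf x
    have : (σ.cycleOf x) ^ ((σ.cycleOf x).support.card / 2) = 1 := by
      rw [(hcyc x).pow_eq_one_iff' hcx]
      rw [cycleOf_pow_apply_self]
      exact hx
    have hdvd : orderOf (σ.cycleOf x) ∣ (σ.cycleOf x).support.card / 2 :=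
      orderOf_dvd_of_pow_eq_one this
    rw [(hcyc x).orderOf] at hdvd
    have h2c := hk2 x
    have := Nat.le_of_dvd (by omega) hdvd
    omega
  have hcomm : ∀ x, f (σ x) = σ (f x) := by
    intro x
    rw [hf]
    simp only
    have hc : σ.cycleOf (σ x) = σ.cycleOf x := cycleOf_self_apply σ x
    rw [hc, ← Perm.mul_apply, ← Perm.mul_apply, ← pow_succ, ← pow_succ']
  refine ⟨Function.Involutive.toPerm f hinv, ?_, hffp, ?_⟩
  · ext x
    simp [Function.Involutive.toPerm, hinv x]
  · ext x
    simp only [Perm.mul_apply, Function.Involutive.coe_toPerm]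
    exact congrArg Fin.val (hcomm x).symm

/-- If σ has cycle type {q, q} (fixed-point-free), σ commutes with a
fixed-point-free involution. -/
lemma exists_invol_of_two_cycles {σ : Perm (Fin n)} {q : ℕ}
    (hct : σ.cycleType = {q, q}) (hfpf : ∀ x, σ x ≠ x) :
    ∃ τ : Perm (Fin n), τ * τ = 1 ∧ (∀ x, τ x ≠ x) ∧ Commute σ τ := by
  classical
  have hcard2 : σ.cycleFactorsFinset.card = 2 := by
    have := congrArg Multiset.card hct
    rw [cycleType_def, Multiset.card_map] at this
    simpa using this
  obtain ⟨c₁, c₂, hne, hfac⟩ := Finset.card_eq_two.mp hcard2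
  have hmem1 : c₁ ∈ σ.cycleFactorsFinset := by rw [hfac]; simp
  have hmem2 : c₂ ∈ σ.cycleFactorsFinset := by rw [hfac]; simp
  have hq : ∀ c ∈ σ.cycleFactorsFinset, c.support.card = q := by
    intro c hc
    have : c.support.card ∈ σ.cycleType := by
      rw [cycleType_def, Multiset.mem_map]
      exact ⟨c, by rwa [← Finset.mem_def], rfl⟩
    rw [hct] at this
    rcases Multiset.mem_cons.mp this with h | h
    · exact h
    · exact Multiset.mem_singleton.mp h
  have hq1 : c₁.support.card = q := hq c₁ hmem1
  have hq2 : c₂.support.card = q := hq c₂ hmem2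
  have hc₁ := (mem_cycleFactorsFinset_iff.mp hmem1)
  have hc₂ := (mem_cycleFactorsFinset_iff.mp hmem2)
  have hdisj : _root_.Disjoint c₁.support c₂.support :=
    Equiv.Perm.Disjoint.disjoint_support
      (cycleFactorsFinset_pairwise_disjoint σ hmem1 hmem2 hne)
  -- the two supports cover everything
  have hsum : σ.cycleType.sum = n := by
    rw [sum_cycleType]
    have : σ.support = Finset.univ := by
      ext x; simp [Perm.mem_support, hfpf x]
    rw [this, Finset.card_univ, Fintype.card_fin]
  have h2q : q + q = n := by
    rw [hct] at hsum
    simpa using hsum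
  have hcover : c₁.support ∪ c₂.support = Finset.univ := by
    apply Finset.eq_univ_of_card
    rw [Finset.card_union_of_disjoint hdisj, hq1, hq2, Fintype.card_fin, h2q]
  obtain ⟨π, hπ⟩ := isConj_iff.mp (hc₁.1.isConj hc₂.1 (by rw [hq1, hq2]))
  -- hπ : π * c₁ * π⁻¹ = c₂
  have hπs : ∀ x ∈ c₁.support, π x ∈ c₂.support := by
    intro x hx
    have : (π * c₁ * π⁻¹).support = c₁.support.map π.toEmbedding := support_conj
    rw [hπ] at this
    rw [this, Finset.mem_map]
    exact ⟨x, hx, rfl⟩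
  have hπs' : ∀ x ∈ c₂.support, π⁻¹ x ∈ c₁.support := by
    intro x hx
    have : (π * c₁ * π⁻¹).support = c₁.support.map π.toEmbedding := support_conj
    rw [hπ] at this
    rw [this, Finset.mem_map] at hx
    obtain ⟨y, hy, rfl⟩ := hx
    simpa using hy
  have hmem_or : ∀ x : Fin n, x ∉ c₁.support → x ∈ c₂.support := by
    intro x hx
    have : x ∈ c₁.support ∪ c₂.support := by rw [hcover]; exact Finset.mem_univ x
    rcases Finset.mem_union.mp this with h | h
    · exact absurd h hx
    · exact h
  set f : Fin n → Fin n := fun x => if x ∈ c₁.support then π x else π⁻¹ x with hf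
  have hinv : Function.Involutive f := by
    intro x
    rw [hf]
    by_cases hx : x ∈ c₁.support
    · simp only [hx, if_true]
      have h2 : π x ∈ c₂.support := hπs x hx
      have h3 : π x ∉ c₁.support := Finset.disjoint_right.mp hdisj h2
      simp [h3]
    · have h2 : x ∈ c₂.support := hmem_or x hx
      have h3 : π⁻¹ x ∈ c₁.support := hπs' x h2
      simp only [hx, if_false]
      simp only [h3, if_true]
      simp
  have hffp : ∀ x, f x ≠ x := by
    intro x hx
    have hx' : (if x ∈ c₁.support then π x else π⁻¹ x) = x := hx
    by_cases hmem : x ∈ c₁.support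
    · rw [if_pos hmem] at hx'
      have := hπs x hmem
      rw [hx'] at this
      exact Finset.disjoint_left.mp hdisj hmem this
    · rw [if_neg hmem] at hx'
      have := hπs' x (hmem_or x hmem)
      rw [hx'] at this
      exact hmem this
  have happly : ∀ g : Perm (Fin n), ∀ x y, g x = y → x = g⁻¹ y := by
    intro g x y h
    rw [← h]; simp
  have hπc : ∀ x, π (c₁ x) = c₂ (π x) := by
    intro x
    have := congrArg (fun g : Perm (Fin n) => g (π x)) hπ
    simpa using this
  have hπc' : ∀ x, π⁻¹ (c₂ x) = c₁ (π⁻¹ x) := by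
    intro x
    have h := hπc (π⁻¹ x)
    rw [show π (π⁻¹ x) = x by simp] at h
    rw [← h]; simp
  have hcomm : ∀ x, f (σ x) = σ (f x) := by
    intro x
    rw [hf]
    by_cases hmem : x ∈ c₁.support
    · have hsx : σ x = c₁ x := (hc₁.2 x hmem).symm
      have hsx1 : c₁ x ∈ c₁.support := Equiv.Perm.apply_mem_support.mpr hmem
      have hfx : π x ∈ c₂.support := hπs x hmem
      have hfx1 : π x ∉ c₁.support := Finset.disjoint_right.mp hdisj hfx
      simp only [hsx, hsx1, if_true, hmem, if_true]
      rw [hπc x, (hc₂.2 (π x) hfx)]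
    · have hx2 : x ∈ c₂.support := hmem_or x hmem
      have hsx : σ x = c₂ x := (hc₂.2 x hx2).symm
      have hsx2 : c₂ x ∈ c₂.support := Equiv.Perm.apply_mem_support.mpr hx2
      have hsx1 : c₂ x ∉ c₁.support := Finset.disjoint_right.mp hdisj hsx2
      have hfx : π⁻¹ x ∈ c₁.support := hπs' x hx2
      simp only [hsx, hsx1, if_false, hmem, if_false]
      rw [hπc' x, (hc₁.2 (π⁻¹ x) hfx)]
  refine ⟨Function.Involutive.toPerm f hinv, ?_, hffp, ?_⟩
  · ext x
    simp [Function.Involutive.toPerm, hinv x]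
  · ext x
    simp only [Perm.mul_apply, Function.Involutive.coe_toPerm]
    exact congrArg Fin.val (hcomm x).symm


lemma multiset_even_sum (m : Multiset ℕ) (h : ∀ a ∈ m, Even a) : Even m.sum := by
  induction m using Multiset.induction_on with
  | empty => simp
  | cons a s ih =>
    rw [Multiset.sum_cons]
    exact Even.add (h a (Multiset.mem_cons_self a s))
      (ih fun b hb => h b (Multiset.mem_cons_of_mem hb))

lemma multiset_card_mul_le (m : Multiset ℕ) (c : ℕ) (h : ∀ a ∈ m, c ≤ 2 * a) :
    Multiset.card m * c ≤ 2 * m.sum := by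
  induction m using Multiset.induction_on with
  | empty => simp
  | cons a s ih =>
    rw [Multiset.sum_cons, Multiset.card_cons]
    have h1 := h a (Multiset.mem_cons_self a s)
    have h2 := ih fun b hb => h b (Multiset.mem_cons_of_mem hb)
    ring_nf
    omega

lemma cycle_factor_invariant {σ c : Perm (Fin n)} (hc : c ∈ σ.cycleFactorsFinset) :
    σ • c.support = c.support := by
  apply Finset.eq_of_subset_of_card_le
  · intro b hb
    rw [Finset.mem_smul_finset] at hb
    obtain ⟨a, ha, rfl⟩ := hb
    have := (mem_cycleFactorsFinset_iff.mp hc).2 a ha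
    rw [Perm.smul_def, ← this]
    exact Equiv.Perm.apply_mem_support.mpr ha
  · rw [Finset.card_smul_finset]

lemma mem_cycleType_exists_factor {σ : Perm (Fin n)} {a : ℕ} (ha : a ∈ σ.cycleType) :
    ∃ c ∈ σ.cycleFactorsFinset, c.support.card = a := by
  rw [cycleType_def, Multiset.mem_map] at ha
  obtain ⟨c, hc, hca⟩ := ha
  exact ⟨c, Finset.mem_def.mpr hc, hca⟩

/-- Dichotomy for the even case -/
lemma even_dichotomy (hn : 4 ≤ n) (hne : Even n) (σ : Perm (Fin n)) :
    (∃ s : Finset (Fin n), σ • s = s ∧ Odd s.card ∧ 2 * s.card < n) ∨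
    (∃ τ : Perm (Fin n), τ * τ = 1 ∧ (∀ x, τ x ≠ x) ∧ Commute σ τ) := by
  classical
  by_cases hfp : ∃ x, σ x = x
  · obtain ⟨x, hx⟩ := hfp
    left
    refine ⟨{x}, ?_, by simp, by simp; omega⟩
    rw [Finset.smul_finset_singleton, Perm.smul_def, hx]
  · push_neg at hfp
    have hsupp : σ.support = Finset.univ := by
      ext x; simp [Perm.mem_support, hfp x]
    have hsum : σ.cycleType.sum = n := by
      rw [sum_cycleType, hsupp, Finset.card_univ, Fintype.card_fin]
    by_cases hodd : ∃ a ∈ σ.cycleType, Odd a ∧ 2 * a < n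
    · obtain ⟨a, ha, haodd, halt⟩ := hodd
      obtain ⟨c, hc, hca⟩ := mem_cycleType_exists_factor ha
      left
      exact ⟨c.support, cycle_factor_invariant hc, hca ▸ haodd, hca ▸ halt⟩
    · push_neg at hodd
      right
      set O := σ.cycleType.filter (fun a => Odd a) with hO
      set E' := σ.cycleType.filter (fun a => ¬ Odd a) with hE
      have hsplit : O + E' = σ.cycleType := Multiset.filter_add_not _ _
      have hEeven : Even E'.sum := by
        apply multiset_even_sum
        intro a ha
        rw [hE, Multiset.mem_filter] at ha
        exact Nat.not_odd_iff_even.mp ha.2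
      have hsum2 : O.sum + E'.sum = n := by
        rw [← Multiset.sum_add, hsplit, hsum]
      by_cases hO0 : O = 0
      · -- all cycle lengths even
        apply exists_invol_of_all_even hfp
        intro a ha
        rcases Nat.even_or_odd a with h | h
        · exact h
        · exfalso
          have : a ∈ O := by
            rw [hO, Multiset.mem_filter]; exact ⟨ha, h⟩
          rw [hO0] at this
          simp at this
      · -- O nonempty: exactly two odd parts, each n/2
        have hObig : ∀ a ∈ O, Odd a ∧ n ≤ 2 * a := by
          intro a ha
          rw [hO, Multiset.mem_filter] at ha
          exact ⟨ha.2, hodd a ha.1 ha.2⟩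
        have hOsum_le : O.sum ≤ n := by omega
        have hcard2 : Multiset.card O * n ≤ 2 * O.sum :=
          multiset_card_mul_le O n (fun a ha => (hObig a ha).2)
        have hn0 : 0 < n := by omega
        have hcle : Multiset.card O ≤ 2 := by
          by_contra h
          push_neg at h
          have : 3 * n ≤ Multiset.card O * n := Nat.mul_le_mul_right n h
          omega
        have hOsum_even : Even O.sum := by
          obtain ⟨e1, he1⟩ := hEeven
          obtain ⟨e2, he2⟩ := hne
          exact ⟨n / 2 - e1, by omega⟩
        have hcne1 : Multiset.card O ≠ 1 := by
          intro h
          obtain ⟨a, ha⟩ := Multiset.card_eq_one.mp h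
          have := hObig a (by rw [ha]; simp)
          rw [ha, Multiset.sum_singleton] at hOsum_even
          rcases this.1 with ⟨m, hm⟩
          obtain ⟨m2, hm2⟩ := hOsum_even
          omega
        have hcne0 : Multiset.card O ≠ 0 := by
          intro h
          exact hO0 (Multiset.card_eq_zero.mp h)
        have hc2 : Multiset.card O = 2 := by omega
        obtain ⟨a, b, hab⟩ := Multiset.card_eq_two.mp hc2
        have haO : a ∈ O := by rw [hab]; simp
        have hbO : b ∈ O := by rw [hab]; simp
        have ha' := hObig a haO
        have hb' := hObig b hbO
        have hOsum : O.sum = a + b := by rw [hab]; simp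
        have h2a : 2 * a = n ∧ 2 * b = n := by omega
        have hEzero : E'.sum = 0 := by omega
        have hE0 : E' = 0 := by
          rw [Multiset.eq_zero_iff_forall_notMem]
          intro x hx
          have hx2 : 2 ≤ x := by
            rw [hE, Multiset.mem_filter] at hx
            exact two_le_of_mem_cycleType (σ := σ) hx.1
          have : x = 0 := by
            by_contra hxne
            have hle := Multiset.single_le_sum (fun y _ => Nat.zero_le y) x hx
            omega
          omega
        have hctOd : σ.cycleType = {a, a} := by
          have hba : b = a := by omega
          rw [← hsplit, hE0, hab, hba]
          rfl
        exact exists_invol_of_two_cycles hctOd hfp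

/-- Dichotomy for the odd case -/
lemma odd_dichotomy (hn : 5 ≤ n) (hno : Odd n) (σ : Perm (Fin n))
    (hσ : σ ∈ alternatingGroup (Fin n)) :
    (∃ s : Finset (Fin n), σ • s = s ∧ 1 ≤ s.card ∧ s.card ≤ n / 3) ∨
    σ.cycleType = {n} := by
  classical
  by_cases hfp : ∃ x, σ x = x
  · obtain ⟨x, hx⟩ := hfp
    left
    refine ⟨{x}, ?_, by simp, by simp; omega⟩
    rw [Finset.smul_finset_singleton, Perm.smul_def, hx]
  · push_neg at hfp
    have hsupp : σ.support = Finset.univ := by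
      ext x; simp [Perm.mem_support, hfp x]
    have hsum : σ.cycleType.sum = n := by
      rw [sum_cycleType, hsupp, Finset.card_univ, Fintype.card_fin]
    by_cases hsmall : ∃ a ∈ σ.cycleType, a ≤ n / 3
    · obtain ⟨a, ha, halt⟩ := hsmall
      obtain ⟨c, hc, hca⟩ := mem_cycleType_exists_factor ha
      left
      refine ⟨c.support, cycle_factor_invariant hc, ?_, hca ▸ halt⟩
      rw [hca]
      have := two_le_of_mem_cycleType ha
      omega
    · push_neg at hsmall
      right
      -- all parts > n/3, so card ≤ 2; sign even forces card odd, so card = 1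
      have hbig : ∀ a ∈ σ.cycleType, n / 3 + 1 ≤ a := fun a ha => hsmall a ha
      have h3 : Multiset.card σ.cycleType • (n / 3 + 1) ≤ σ.cycleType.sum :=
        Multiset.card_nsmul_le_sum hbig
      rw [smul_eq_mul, hsum] at h3
      have hcard_le : Multiset.card σ.cycleType ≤ 2 := by
        by_contra h
        push_neg at h
        have h4 : 3 * (n / 3 + 1) ≤ Multiset.card σ.cycleType * (n / 3 + 1) :=
          Nat.mul_le_mul_right _ h
        omega
      have hsign : Perm.sign σ = 1 := mem_alternatingGroup.mp hσ
      rw [sign_of_cycleType] at hsign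
      have hpar : ¬ Odd (σ.cycleType.sum + Multiset.card σ.cycleType) := by
        intro hoddpar
        rw [Odd.neg_one_pow hoddpar] at hsign
        exact absurd hsign (by decide)
      rw [Nat.not_odd_iff_even] at hpar
      have hcard1 : Multiset.card σ.cycleType = 1 := by
        rw [hsum] at hpar
        rw [Nat.even_add] at hpar
        rcases hno with ⟨m, hm⟩
        have hcne0 : Multiset.card σ.cycleType ≠ 0 := by
          intro h0
          rw [Multiset.card_eq_zero.mp h0] at hsum
          simp at hsum
          omega
        rcases Nat.even_or_odd (Multiset.card σ.cycleType) with he | ho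
        · exfalso
          have : Even n := hpar.mpr he
          rw [Nat.even_iff] at this
          omega
        · rcases ho with ⟨c, hc⟩
          omega
      obtain ⟨a, ha⟩ := Multiset.card_eq_one.mp hcard1
      rw [ha] at hsum
      rw [Multiset.sum_singleton] at hsum
      rw [ha, hsum]


/-- permCongr as a MulEquiv -/
def permMulEquiv {α β : Type*} (φ : α ≃ β) : Perm α ≃* Perm β :=
  { Equiv.permCongr φ with
    map_mul' := fun f g => by
      ext x
      simp [Equiv.permCongr_apply] }

lemma permMulEquiv_apply {α β : Type*} (φ : α ≃ β) (f : Perm α) (x : β) :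
    (permMulEquiv φ) f x = φ (f (φ.symm x)) := rfl

lemma permMulEquiv_sign {α β : Type*} [DecidableEq α] [Fintype α] [DecidableEq β] [Fintype β]
    (φ : α ≃ β) (f : Perm α) : Perm.sign ((permMulEquiv φ) f) = Perm.sign f :=
  Equiv.Perm.sign_permCongr φ f

lemma permMulEquiv_cycleType {α : Type*} [DecidableEq α] [Fintype α]
    (φ : α ≃ Fin n) {f : Perm α} (hf : IsCycle f) (hs : f.support = Finset.univ) :
    ((permMulEquiv φ) f).cycleType = {n} := by
  set g := (permMulEquiv φ) f with hg
  have hmoved : ∀ y : Fin n, g y ≠ y ↔ f (φ.symm y) ≠ φ.symm y := by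
    intro y
    rw [permMulEquiv_apply]
    constructor
    · intro h h2
      exact h (by rw [h2]; simp)
    · intro h h2
      apply h
      apply φ.injective.eq_iff.mp
      rw [h2]; simp
  have hgc : IsCycle g := by
    obtain ⟨x, hx, hsc⟩ := hf
    refine ⟨φ x, ?_, ?_⟩
    · rw [hmoved]
      simpa using hx
    · intro y hy
      obtain ⟨k, hk⟩ := hsc ((hmoved y).mp hy)
      refine ⟨k, ?_⟩
      have : g ^ k = (permMulEquiv φ) (f ^ k) := (map_zpow (permMulEquiv φ) f k).symm
      rw [this, permMulEquiv_apply]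
      simp only [Equiv.symm_apply_apply]
      rw [hk]
      simp
  have hgs : g.support = Finset.univ := by
    ext y
    simp only [Perm.mem_support, Finset.mem_univ, iff_true]
    rw [hmoved]
    have : φ.symm y ∈ f.support := by rw [hs]; exact Finset.mem_univ _
    exact Perm.mem_support.mp this
  rw [hgc.cycleType, hgs, Finset.card_univ, Fintype.card_fin]

/-- generic covering step: if K contains an odd element and an element conjugate to σ,
then some even conjugate of σ lies in K -/
lemma class_cover_of_rep {K : Subgroup (Perm (Fin n))} {c w : Perm (Fin n)}
    (hc : c ∈ K) (hw : w ∈ K) (hwodd : Perm.sign w = -1)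
    {σ : Perm (Fin n)} (hconj : IsConj c σ) :
    ∃ x ∈ alternatingGroup (Fin n), x * σ * x⁻¹ ∈ K := by
  obtain ⟨y, hy⟩ := isConj_iff.mp hconj
  have hyc : y⁻¹ * σ * y = c := by rw [← hy]; group
  rcases Int.units_eq_one_or (Perm.sign y⁻¹) with hs | hs
  · refine ⟨y⁻¹, mem_alternatingGroup.mpr hs, ?_⟩
    rw [show y⁻¹ * σ * y⁻¹⁻¹ = y⁻¹ * σ * y by group, hyc]
    exact hc
  · refine ⟨w * y⁻¹, ?_, ?_⟩
    · rw [mem_alternatingGroup, map_mul, hwodd, hs]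
      norm_num
    · have : w * y⁻¹ * σ * (w * y⁻¹)⁻¹ = w * (y⁻¹ * σ * y) * w⁻¹ := by group
      rw [this, hyc]
      exact Subgroup.mul_mem _ (Subgroup.mul_mem _ hw hc) (Subgroup.inv_mem _ hw)

/-- sign of an involution with support of size 2*m, m odd -/
lemma sign_of_involution {α : Type*} [DecidableEq α] [Fintype α] (τ : Perm α)
    (h2 : τ * τ = 1) (hne : τ ≠ 1) {m : ℕ} (hm : τ.support.card = 2 * m)
    (hmodd : Odd m) : Perm.sign τ = -1 := by
  have horder : orderOf τ = 2 := by
    apply orderOf_eq_prime _ hne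
    rw [pow_two]; exact h2
  obtain ⟨k, hk⟩ := cycleType_prime_order (by rw [horder]; exact Nat.prime_two)
  rw [horder] at hk
  have hsum : τ.cycleType.sum = 2 * m := by rw [sum_cycleType, hm]
  rw [hk, Multiset.sum_replicate, smul_eq_mul] at hsum
  have hkm : k + 1 = m := by omega
  rw [sign_of_cycleType, hk, Multiset.sum_replicate, Multiset.card_replicate, smul_eq_mul,
    hkm]
  have : Odd (m * 2 + m) := by
    rcases hmodd with ⟨j, hj⟩
    exact ⟨3 * j + 1, by omega⟩
  rw [Odd.neg_one_pow this]

/-- addLeft 1 on ZMod n is an n-cycle -/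
lemma addLeft_one_isCycle [NeZero n] (hn1 : 1 < n) :
    IsCycle (Equiv.addLeft (1 : ZMod n)) ∧ (Equiv.addLeft (1 : ZMod n)).support = Finset.univ := by
  haveI : Fact (1 < n) := ⟨hn1⟩
  have hmove : ∀ x : ZMod n, Equiv.addLeft (1 : ZMod n) x ≠ x := by
    intro x h
    simp only [Equiv.coe_addLeft] at h
    have h10 : (1 : ZMod n) = 0 := by
      have := congrArg (fun y => y - x) h
      simpa using this
    exact one_ne_zero h10
  constructor
  · refine ⟨0, hmove 0, ?_⟩
    intro y _
    refine ⟨(y.val : ℤ), ?_⟩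
    rw [zpow_natCast, show ∀ m : ℕ, Equiv.addLeft (1 : ZMod n) ^ m = Equiv.addLeft (m • (1 : ZMod n)) from by
      intro m
      induction m with
      | zero => ext x; simp
      | succ k ih => rw [pow_succ, ih]; ext x; simp [succ_nsmul, add_assoc]]
    simp only [Equiv.coe_addLeft, nsmul_eq_mul, mul_one]
    rw [add_zero]
    exact ZMod.natCast_rightInverse y
  · ext x
    simp [Perm.mem_support, hmove x]

/-- distinctness of small elements of ZMod n -/
lemma zmod_distinct (hn : 5 ≤ n) :
    (1 : ZMod n) ≠ 0 ∧ (2 : ZMod n) ≠ 0 ∧ (2 : ZMod n) ≠ 1 ∧ (3 : ZMod n) ≠ 0 := by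
  haveI : NeZero n := ⟨by omega⟩
  haveI : Fact (1 < n) := ⟨by omega⟩
  have h2 : ((2 : ℕ) : ZMod n) ≠ 0 := by
    rw [Ne, ZMod.natCast_eq_zero_iff]
    intro h
    have := Nat.le_of_dvd (by norm_num) h
    omega
  have h3 : ((3 : ℕ) : ZMod n) ≠ 0 := by
    rw [Ne, ZMod.natCast_eq_zero_iff]
    intro h
    have := Nat.le_of_dvd (by norm_num) h
    omega
  refine ⟨one_ne_zero, by simpa using h2, ?_, by simpa using h3⟩
  intro h
  apply one_ne_zero (α := ZMod n)
  calc (1 : ZMod n) = 2 - 1 := by ring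
  _ = 1 - 1 := by rw [h]
  _ = 0 := by ring

/-- the three cycle 0 ↦ 1 ↦ 2 ↦ 0 on ZMod n -/
lemma gamma_three_cycle [NeZero n] (hn : 5 ≤ n) :
    ∃ γ : Perm (ZMod n), Perm.sign γ = 1 ∧ γ 0 = 1 ∧ γ 1 = 2 ∧ γ 2 = 0 ∧
      ∀ x : ZMod n, x ≠ 0 → x ≠ 1 → x ≠ 2 → γ x = x := by
  obtain ⟨h10, h20, h21, _⟩ := zmod_distinct hn
  refine ⟨Equiv.swap 0 2 * Equiv.swap 0 1, ?_, ?_, ?_, ?_, ?_⟩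
  · rw [map_mul, Perm.sign_swap (Ne.symm h20), Perm.sign_swap (Ne.symm h10)]
    norm_num
  · simp only [Perm.mul_apply, Equiv.swap_apply_left]
    exact Equiv.swap_apply_of_ne_of_ne h10 (Ne.symm h21)
  · simp only [Perm.mul_apply]
    rw [Equiv.swap_apply_right, Equiv.swap_apply_left]
  · simp only [Perm.mul_apply]
    rw [Equiv.swap_apply_of_ne_of_ne h20 h21, Equiv.swap_apply_right]
  · intro x hx0 hx1 hx2
    simp only [Perm.mul_apply]
    rw [Equiv.swap_apply_of_ne_of_ne hx0 hx1, Equiv.swap_apply_of_ne_of_ne hx0 hx2]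

/-- the n-cycle class for prime n -/
lemma ncycle_class_prime [NeZero n] (hn : 5 ≤ n) (hno : Odd n) (hp : n.Prime) :
    ∃ K' : Subgroup (Perm (ZMod n)), (∃ g, Perm.sign g = 1 ∧ g ∉ K') ∧
      Equiv.addLeft (1 : ZMod n) ∈ K' ∧ ∃ w ∈ K', Perm.sign w = -1 := by
  haveI : Fact (n.Prime) := ⟨hp⟩
  obtain ⟨h10, h20, h21, h30⟩ := zmod_distinct hn
  set K' : Subgroup (Perm (ZMod n)) :=
    { carrier := {f : Perm (ZMod n) | ∃ a b : ZMod n, a ≠ 0 ∧ ∀ x, f x = a * x + b}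
      one_mem' := ⟨1, 0, one_ne_zero, fun x => by simp⟩
      mul_mem' := by
        rintro f g ⟨a, b, ha, hf⟩ ⟨c, d, hc, hg⟩
        refine ⟨a * c, a * d + b, mul_ne_zero ha hc, fun x => ?_⟩
        rw [Perm.mul_apply, hg, hf]
        ring
      inv_mem' := by
        rintro f ⟨a, b, ha, hf⟩
        refine ⟨a⁻¹, -(a⁻¹ * b), inv_ne_zero ha, fun x => ?_⟩
        rw [Perm.inv_eq_iff_eq, hf]
        field_simp
        ring } with hK'
  refine ⟨K', ?_, ?_, ?_⟩
  · obtain ⟨γ, hγs, h0, h1, h2, -⟩ := gamma_three_cycle hn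
    refine ⟨γ, hγs, ?_⟩
    rintro ⟨a, b, ha, hfa⟩
    have e0 := hfa 0
    rw [h0, mul_zero, zero_add] at e0
    have e1 := hfa 1
    rw [h1, mul_one, ← e0] at e1
    have ha1 : a = 1 := by linear_combination (-1 : ZMod n) * e1
    have e2 := hfa 2
    rw [h2, ha1, one_mul, ← e0] at e2
    apply h30
    linear_combination (-1 : ZMod n) * e2
  · exact ⟨1, 1, one_ne_zero, fun x => by simp [add_comm]⟩
  · -- multiplication by a generator of the units
    obtain ⟨u, hu⟩ := IsCyclic.exists_generator (α := (ZMod n)ˣ)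
    set w : Perm (ZMod n) := MulAction.toPermHom (ZMod n)ˣ (ZMod n) u with hw
    have hwapp : ∀ x : ZMod n, w x = (u : ZMod n) * x := fun x => rfl
    have hune : (u : ZMod n) ≠ 1 := by
      intro h
      have hu1 : u = 1 := Units.ext h
      have hm1 : (-1 : (ZMod n)ˣ) ∈ Subgroup.zpowers u := hu (-1)
      rw [hu1, Subgroup.mem_zpowers_iff] at hm1
      obtain ⟨k, hk⟩ := hm1
      rw [one_zpow] at hk
      have hm1v : ((-1 : (ZMod n)ˣ) : ZMod n) = 1 := by rw [← hk]; rfl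
      rw [Units.val_neg, Units.val_one] at hm1v
      apply h20
      calc (2 : ZMod n) = 1 - (-1) := by ring
      _ = 1 - 1 := by rw [hm1v]
      _ = 0 := by ring
    have hu0 : (u : ZMod n) ≠ 0 := Units.ne_zero u
    have hwmoved : ∀ x : ZMod n, w x ≠ x ↔ x ≠ 0 := by
      intro x
      rw [hwapp]
      constructor
      · intro h hx
        rw [hx, mul_zero] at h
        exact h rfl
      · intro hx h
        apply hune
        have := congrArg (fun y => y * x⁻¹) h
        simpa [mul_assoc, mul_inv_cancel₀ hx] using this
    have hwcyc : IsCycle w := by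
      refine ⟨1, ?_, ?_⟩
      · rw [hwmoved]; exact one_ne_zero
      · intro y hy
        have hy0 : y ≠ 0 := (hwmoved y).mp hy
        have : IsUnit y := isUnit_iff_ne_zero.mpr hy0
        obtain ⟨vy, hvy⟩ := this
        obtain ⟨k, hk⟩ := hu vy
        refine ⟨k, ?_⟩
        have hpow : w ^ k = MulAction.toPermHom (ZMod n)ˣ (ZMod n) (u ^ k) := by
          rw [hw, map_zpow]
        rw [hpow]
        have hk' : u ^ k = vy := hk
        show ((u ^ k : (ZMod n)ˣ) : ZMod n) * 1 = y
        rw [mul_one, hk', hvy]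
    have hwsupp : w.support = {(0 : ZMod n)}ᶜ := by
      ext x
      rw [Perm.mem_support, hwmoved, Finset.mem_compl, Finset.mem_singleton]
    have hwcard : w.support.card = n - 1 := by
      rw [hwsupp, Finset.card_compl, Finset.card_singleton, ZMod.card]
    refine ⟨w, ⟨(u : ZMod n), 0, hu0, fun x => by rw [hwapp, add_zero]⟩, ?_⟩
    rw [hwcyc.sign, hwcard]
    have : Even (n - 1) := by
      obtain ⟨j, hj⟩ := hno
      exact ⟨j, by omega⟩
    rw [Even.neg_one_pow this]

/-- the n-cycle class for odd composite n -/
lemma ncycle_class_composite [NeZero n] (hn : 5 ≤ n) (hno : Odd n) (hnp : ¬ n.Prime) :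
    ∃ K' : Subgroup (Perm (ZMod n)), (∃ g, Perm.sign g = 1 ∧ g ∉ K') ∧
      Equiv.addLeft (1 : ZMod n) ∈ K' ∧ ∃ w ∈ K', Perm.sign w = -1 := by
  haveI : Fact (1 < n) := ⟨by omega⟩
  set e : ℕ := n.minFac with hedef
  set d : ℕ := n / e with hddef
  have hedvd : e ∣ n := Nat.minFac_dvd n
  have hep : e.Prime := Nat.minFac_prime (by omega)
  have hene2 : e ≠ 2 := by
    intro h
    rw [Nat.odd_iff] at hno
    have : 2 ∣ n := h ▸ hedvd
    omega
  have he3 : 3 ≤ e := by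
    have := hep.two_le
    omega
  have hed : e * d = n := Nat.mul_div_cancel' hedvd
  have hne : e ≠ n := by
    intro h
    exact hnp (h ▸ hep)
  have helt : e < n := lt_of_le_of_ne (Nat.le_of_dvd (by omega) hedvd) hne
  have hd2 : 2 ≤ d := by
    rcases Nat.lt_or_ge d 2 with h | h
    · interval_cases d <;> omega
    · exact h
  have hdodd : Odd d := by
    by_contra hev
    rw [Nat.not_odd_iff_even] at hev
    obtain ⟨j, hj⟩ := hev
    have h2n : n = 2 * (e * j) := by rw [← hed, hj]; ring
    rw [Nat.odd_iff] at hno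
    omega
  have hd3 : 3 ≤ d := by
    obtain ⟨j, hj⟩ := hdodd
    omega
  have hdlt : d < n := by
    have h3 : d * 3 ≤ d * e := Nat.mul_le_mul_left d he3
    have h4 : d * e = n := by rw [← hed]; ring
    omega
  have hdz : (d : ZMod n) ≠ 0 := by
    rw [Ne, ZMod.natCast_eq_zero_iff]
    intro h
    have := Nat.le_of_dvd (by omega) h
    omega
  have h1z : (1 : ZMod n) ≠ 0 := one_ne_zero
  have hde0 : (d : ZMod n) * (e : ZMod n) = 0 := by
    rw [← Nat.cast_mul, show d * e = n by rw [← hed]; ring, ZMod.natCast_self]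
  set β : Perm (ZMod n) := Equiv.addLeft (e : ZMod n) with hβ
  set K' : Subgroup (Perm (ZMod n)) := Subgroup.centralizer {β} with hK'
  have hmemK : ∀ g : Perm (ZMod n), g ∈ K' ↔ β * g = g * β := by
    intro g
    rw [hK', Subgroup.mem_centralizer_iff]
    constructor
    · intro h; exact h β (Set.mem_singleton _)
    · intro h x hx; rw [Set.mem_singleton_iff] at hx; rw [hx]; exact h
  have heZ : (e : ZMod n) ≠ 0 := by
    rw [Ne, ZMod.natCast_eq_zero_iff]
    intro h
    have := Nat.le_of_dvd (by omega) h
    omega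
  have heZ1 : (e : ZMod n) ≠ 1 := by
    intro h
    have h1 : ((e : ℕ) : ZMod n) = ((1 : ℕ) : ZMod n) := by simpa using h
    have := congrArg ZMod.val h1
    rw [ZMod.val_cast_of_lt helt, ZMod.val_cast_of_lt (by omega)] at this
    omega
  have heZ2 : (e : ZMod n) ≠ 2 := by
    intro h
    have h1 : ((e : ℕ) : ZMod n) = ((2 : ℕ) : ZMod n) := by
      rw [h]; norm_num
    have := congrArg ZMod.val h1
    rw [ZMod.val_cast_of_lt helt, ZMod.val_cast_of_lt (by omega)] at this
    omega
  refine ⟨K', ?_, ?_, ?_⟩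
  · -- properness
    obtain ⟨γ, hγs, h0, h1, h2, hfix⟩ := gamma_three_cycle hn
    refine ⟨γ, hγs, ?_⟩
    intro hmem
    have hcm := (hmemK γ).mp hmem
    have heval := congrArg (fun f : Perm (ZMod n) => f 0) hcm
    simp only [Perm.mul_apply] at heval
    -- β (γ 0) = γ (β 0)
    rw [h0] at heval
    have hβ0 : β 0 = (e : ZMod n) := by
      rw [hβ]; simp
    have hβ1 : β 1 = (e : ZMod n) + 1 := by
      rw [hβ]; simp
    rw [hβ0] at heval
    rw [hβ1] at heval
    rw [hfix (e : ZMod n) heZ heZ1 heZ2] at heval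
    exact h1z (by linear_combination heval)
  · -- addLeft 1 is in the centralizer
    rw [hmemK]
    rw [hβ, ← addLeft_add, ← addLeft_add, add_comm]
  · -- the odd element v
    set f : ZMod n → ZMod n := fun x =>
      if (d : ZMod n) * x = 0 then x + 1
      else if (d : ZMod n) * (x - 1) = 0 then x - 1 else x with hf
    have hfval : ∀ x, f x = if (d : ZMod n) * x = 0 then x + 1
      else if (d : ZMod n) * (x - 1) = 0 then x - 1 else x := fun x => rfl
    have hinv : Function.Involutive f := by
      intro x
      by_cases hx1 : (d : ZMod n) * x = 0
      · have c1 : (d : ZMod n) * (x + 1) ≠ 0 := by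
          rw [mul_add, hx1, mul_one, zero_add]
          exact hdz
        have c2 : (d : ZMod n) * ((x + 1) - 1) = 0 := by
          rw [add_sub_cancel_right]
          exact hx1
        rw [hfval x, if_pos hx1, hfval _, if_neg c1, if_pos c2, add_sub_cancel_right]
      · by_cases hx2 : (d : ZMod n) * (x - 1) = 0
        · rw [hfval x, if_neg hx1, if_pos hx2, hfval _, if_pos hx2, sub_add_cancel]
        · rw [hfval x, if_neg hx1, if_neg hx2, hfval x, if_neg hx1, if_neg hx2]
    set v : Perm (ZMod n) := Function.Involutive.toPerm f hinv with hv
    have hvapp : ∀ x, v x = f x := fun x => rfl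
    have hvsq : v * v = 1 := by
      apply Equiv.ext
      intro x
      exact hinv x
    have hβapp : ∀ y : ZMod n, β y = (e : ZMod n) + y := fun y => by rw [hβ]; simp
    have hvmem : v ∈ K' := by
      rw [hmemK]
      apply Equiv.ext
      intro x
      simp only [Perm.mul_apply]
      rw [hvapp, hvapp, hβapp, hβapp]
      have hc1 : (d : ZMod n) * ((e : ZMod n) + x) = (d : ZMod n) * x := by
        rw [mul_add, hde0, zero_add]
      have hc2 : (d : ZMod n) * (((e : ZMod n) + x) - 1) = (d : ZMod n) * (x - 1) := by
        rw [show ((e : ZMod n) + x) - 1 = (e : ZMod n) + (x - 1) by ring, mul_add, hde0, zero_add]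
      by_cases hx1 : (d : ZMod n) * x = 0
      · rw [hfval x, if_pos hx1, hfval ((e : ZMod n) + x), if_pos (by rw [hc1]; exact hx1)]
        ring
      · by_cases hx2 : (d : ZMod n) * (x - 1) = 0
        · rw [hfval x, if_neg hx1, if_pos hx2, hfval ((e : ZMod n) + x),
            if_neg (by rw [hc1]; exact hx1), if_pos (by rw [hc2]; exact hx2)]
          ring
        · rw [hfval x, if_neg hx1, if_neg hx2, hfval ((e : ZMod n) + x),
            if_neg (by rw [hc1]; exact hx1), if_neg (by rw [hc2]; exact hx2)]
    -- support computation
    set A : Finset (ZMod n) := Finset.univ.filter (fun x => (d : ZMod n) * x = 0) with hA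
    set B : Finset (ZMod n) := Finset.univ.filter (fun x => (d : ZMod n) * (x - 1) = 0) with hB
    have hAB : _root_.Disjoint A B := by
      rw [Finset.disjoint_left]
      intro x hxA hxB
      rw [hA, Finset.mem_filter] at hxA
      rw [hB, Finset.mem_filter] at hxB
      apply hdz
      calc (d : ZMod n) = (d : ZMod n) * x - (d : ZMod n) * (x - 1) := by ring
      _ = 0 := by rw [hxA.2, hxB.2]; ring
    have hsupp : v.support = A ∪ B := by
      ext x
      rw [Perm.mem_support, Finset.mem_union, hA, hB, Finset.mem_filter, Finset.mem_filter]
      rw [hvapp, hfval]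
      by_cases hx1 : (d : ZMod n) * x = 0
      · rw [if_pos hx1]
        constructor
        · intro _; left; exact ⟨Finset.mem_univ _, hx1⟩
        · intro _ h
          apply h1z
          linear_combination h
      · by_cases hx2 : (d : ZMod n) * (x - 1) = 0
        · rw [if_neg hx1, if_pos hx2]
          constructor
          · intro _; right; exact ⟨Finset.mem_univ _, hx2⟩
          · intro _ h
            apply h1z
            linear_combination -h
        · rw [if_neg hx1, if_neg hx2]
          constructor
          · intro h; exact absurd rfl h
          · rintro (⟨_, h⟩ | ⟨_, h⟩)
            · exact absurd h hx1
            · exact absurd h hx2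
    have hcardA : A.card = d := by
      have himg : A = Finset.image (fun k : Fin d => ((k.val * e : ℕ) : ZMod n)) Finset.univ := by
        ext x
        rw [hA, Finset.mem_filter, Finset.mem_image]
        constructor
        · rintro ⟨-, hx⟩
          have hx' : ((d * x.val : ℕ) : ZMod n) = 0 := by
            rw [Nat.cast_mul]
            rw [ZMod.natCast_rightInverse x]
            exact hx
          rw [ZMod.natCast_eq_zero_iff] at hx'
          obtain ⟨t, ht⟩ := hx'
          have hdne : d ≠ 0 := by omega
          have hxval : x.val = e * t := by
            have : d * x.val = d * (e * t) := by
              rw [ht, ← hed]; ring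
            exact Nat.eq_of_mul_eq_mul_left (by omega) this
          have htlt : t < d := by
            have hxlt : x.val < n := ZMod.val_lt x
            by_contra hge
            push_neg at hge
            have : e * d ≤ e * t := Nat.mul_le_mul_left e hge
            omega
          refine ⟨⟨t, htlt⟩, Finset.mem_univ _, ?_⟩
          show ((t * e : ℕ) : ZMod n) = x
          rw [show t * e = e * t by ring, ← hxval]
          exact ZMod.natCast_rightInverse x
        · rintro ⟨k, -, rfl⟩
          refine ⟨Finset.mem_univ _, ?_⟩
          rw [← Nat.cast_mul, show d * (k.val * e) = k.val * n by rw [← hed]; ring,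
            Nat.cast_mul, ZMod.natCast_self, mul_zero]
      rw [himg]
      rw [Finset.card_image_of_injective _ ?_, Finset.card_univ, Fintype.card_fin]
      intro k k' hkk
      have h1 : k.val * e < n := by
        have : k.val + 1 ≤ d := k.2
        have : (k.val + 1) * e ≤ d * e := Nat.mul_le_mul_right e this
        have he0 : 0 < e := by omega
        nlinarith
      have h2 : k'.val * e < n := by
        have : (k'.val + 1) * e ≤ d * e := Nat.mul_le_mul_right e k'.2
        nlinarith
      have := congrArg ZMod.val hkk
      rw [ZMod.val_cast_of_lt h1, ZMod.val_cast_of_lt h2] at this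
      have : k.val = k'.val := Nat.eq_of_mul_eq_mul_right (by omega) this
      exact Fin.ext this
    have hcardB : B.card = d := by
      have himg : B = Finset.image (fun a => a + 1) A := by
        ext y
        rw [hB, Finset.mem_filter, Finset.mem_image]
        constructor
        · rintro ⟨-, hy⟩
          exact ⟨y - 1, by rw [hA, Finset.mem_filter]; exact ⟨Finset.mem_univ _, hy⟩,
            by ring⟩
        · rintro ⟨a, ha, rfl⟩
          rw [hA, Finset.mem_filter] at ha
          exact ⟨Finset.mem_univ _, by rw [add_sub_cancel_right]; exact ha.2⟩
      rw [himg, Finset.card_image_of_injective _ (add_left_injective 1), hcardA]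
    have hvne : v ≠ 1 := by
      intro h
      have h0A : (d : ZMod n) * 0 = 0 := by rw [mul_zero]
      have h1 : v 0 = 0 + 1 := by rw [hvapp, hfval, if_pos h0A]
      rw [h] at h1
      have h2 : (0 : ZMod n) = 1 := by simpa using h1
      exact h1z h2.symm
    have hvcard : v.support.card = 2 * d := by
      rw [hsupp, Finset.card_union_of_disjoint hAB, hcardA, hcardB]
      omega
    exact ⟨v, hvmem, sign_of_involution v hvsq hvne hvcard hdodd⟩


/-- the n-cycle class on Fin n, for odd n ≥ 5 -/
lemma ncycle_class (hn : 5 ≤ n) (hno : Odd n) :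
    ∃ K : Subgroup (Perm (Fin n)),
      (∃ g ∈ alternatingGroup (Fin n), g ∉ K) ∧
      ∀ σ : Perm (Fin n), σ.cycleType = {n} →
        ∃ x ∈ alternatingGroup (Fin n), x * σ * x⁻¹ ∈ K := by
  haveI : NeZero n := ⟨by omega⟩
  have hZ : ∃ K' : Subgroup (Perm (ZMod n)), (∃ g, Perm.sign g = 1 ∧ g ∉ K') ∧
      Equiv.addLeft (1 : ZMod n) ∈ K' ∧ ∃ w ∈ K', Perm.sign w = -1 := by
    by_cases hp : n.Prime
    · exact ncycle_class_prime hn hno hp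
    · exact ncycle_class_composite hn hno hp
  obtain ⟨K', ⟨g', hg's, hg'K⟩, hc₀, w', hw'K, hw's⟩ := hZ
  set φ : ZMod n ≃ Fin n := Fintype.equivFinOfCardEq (ZMod.card n) with hφ
  set Φ := permMulEquiv φ with hΦ
  set K : Subgroup (Perm (Fin n)) := Subgroup.map Φ.toMonoidHom K' with hK
  refine ⟨K, ⟨Φ g', ?_, ?_⟩, ?_⟩
  · rw [mem_alternatingGroup, hΦ, permMulEquiv_sign]
    exact hg's
  · rw [hK, Subgroup.mem_map_equiv]
    rw [MulEquiv.symm_apply_apply]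
    exact hg'K
  · intro σ hσ
    have hcK : Φ (Equiv.addLeft (1 : ZMod n)) ∈ K := by
      rw [hK]
      exact Subgroup.mem_map_of_mem _ hc₀
    have hwK : Φ w' ∈ K := by
      rw [hK]
      exact Subgroup.mem_map_of_mem _ hw'K
    have hws : Perm.sign (Φ w') = -1 := by
      rw [hΦ, permMulEquiv_sign]; exact hw's
    have hcct : (Φ (Equiv.addLeft (1 : ZMod n))).cycleType = {n} := by
      obtain ⟨h1, h2⟩ := addLeft_one_isCycle (n := n) (by omega)
      exact permMulEquiv_cycleType φ h1 h2
    apply class_cover_of_rep hcK hwK hws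
    rw [isConj_iff_cycleType_eq, hcct, hσ]

/-- the odd case -/
lemma odd_case (hn : 5 ≤ n) (hno : Odd n) :
    normalCoveringNumber (alternatingGroup (Fin n)) ≤ (n + 3) / 3 := by
  classical
  have hk : (n + 3) / 3 = n / 3 + 1 := Nat.add_div_right n (by norm_num)
  rw [hk]
  obtain ⟨KC, hKCprop, hKCcov⟩ := ncycle_class hn hno
  have hS : ∀ j : ℕ, ∃ t : Finset (Fin n), j ≤ n → t.card = j := by
    intro j
    by_cases h : j ≤ n
    · obtain ⟨t, -, ht⟩ := Finset.exists_subset_card_eq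
        (s := (Finset.univ : Finset (Fin n))) (n := j)
        (by simpa [Fintype.card_fin] using h)
      exact ⟨t, fun _ => ht⟩
    · exact ⟨∅, fun hh => absurd hh h⟩
  choose S hSc using hS
  apply ncn_le_of_cover (fun i : Fin (n / 3 + 1) =>
    if i.val = 0 then KC else MulAction.stabilizer (Perm (Fin n)) (S i.val))
  · intro i
    by_cases h0 : i.val = 0
    · rw [if_pos h0]
      exact hKCprop
    · rw [if_neg h0]
      have hile : i.val ≤ n / 3 := by omega
      have hcard : (S i.val).card = i.val := hSc i.val (by omega)
      apply stab_proper <;> rw [hcard] <;> omega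
  · intro σ hσ
    rcases odd_dichotomy hn hno σ hσ with ⟨s, hinv, h1, h3⟩ | hcyc
    · refine ⟨⟨s.card, by omega⟩, ?_⟩
      have h0 : ¬ (s.card = 0) := by omega
      rw [if_neg h0]
      have hcard : (S s.card).card = s.card := hSc s.card (by omega)
      exact stab_cover hcard.symm (by omega) hinv
    · refine ⟨⟨0, by omega⟩, ?_⟩
      rw [if_pos rfl]
      exact hKCcov σ hcyc

/-- the even case -/
lemma even_case (hn : 4 ≤ n) (hne : Even n) :
    normalCoveringNumber (alternatingGroup (Fin n)) ≤ (n + 4) / 4 := by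
  classical
  have hk : (n + 4) / 4 = n / 4 + 1 := Nat.add_div_right n (by norm_num)
  rw [hk]
  have hn2 : n % 2 = 0 := Nat.even_iff.mp hne
  have hS : ∀ j : ℕ, ∃ t : Finset (Fin n), j ≤ n → t.card = j := by
    intro j
    by_cases h : j ≤ n
    · obtain ⟨t, -, ht⟩ := Finset.exists_subset_card_eq
        (s := (Finset.univ : Finset (Fin n))) (n := j)
        (by simpa [Fintype.card_fin] using h)
      exact ⟨t, fun _ => ht⟩
    · exact ⟨∅, fun hh => absurd hh h⟩
  choose S hSc using hS
  apply ncn_le_of_cover (fun i : Fin (n / 4 + 1) =>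
    if i.val = 0 then Subgroup.centralizer {(Fin.revPerm : Perm (Fin n))}
    else MulAction.stabilizer (Perm (Fin n)) (S (2 * i.val - 1)))
  · intro i
    by_cases h0 : i.val = 0
    · rw [if_pos h0]
      exact cent_rev_proper hn
    · rw [if_neg h0]
      have hile : i.val ≤ n / 4 := by omega
      have hcard : (S (2 * i.val - 1)).card = 2 * i.val - 1 := hSc _ (by omega)
      apply stab_proper <;> rw [hcard] <;> omega
  · intro σ hσ
    rcases even_dichotomy hn hne σ with ⟨s, hinv, hodd, hlt⟩ | ⟨τ, hτ2, hτf, hτc⟩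
    · obtain ⟨b, hb⟩ := hodd
      refine ⟨⟨b + 1, by omega⟩, ?_⟩
      have h0 : ¬ (b + 1 = 0) := by omega
      rw [if_neg h0]
      have hval : 2 * (b + 1) - 1 = s.card := by omega
      rw [hval]
      have hcard : (S s.card).card = s.card := hSc s.card (by omega)
      exact stab_cover hcard.symm (by omega) hinv
    · refine ⟨⟨0, by omega⟩, ?_⟩
      rw [if_pos rfl]
      exact cent_rev_cover (by omega) hne hτ2 hτf hτc

end GammaAlt

theorem gamma_alt_upper (n : ℕ) :
    (5 ≤ n → Odd n → normalCoveringNumber (alternatingGroup (Fin n)) ≤ (n + 3) / 3) ∧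
    (4 ≤ n → Even n → normalCoveringNumber (alternatingGroup (Fin n)) ≤ (n + 4) / 4) := by
  constructor
  · intro h1 h2
    exact GammaAlt.odd_case h1 h2
  · intro h1 h2
    exact GammaAlt.even_case h1 h2
end
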